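/- arXiv:2006.02829 — 12 statements merged into one kernel-verified Lean document; each statement's English description precedes it below -/
import Mathlib

section
/- If G is a well-dominated finite simple graph of order n (i.e., all minimal dominating sets of G have the same cardinality), then Ψ⁻_g(G) = Ψ⁺_g(G) = n − γ(G). -/
namespace EnclavelessGame

variable {V : Type*} [Fintype V] [DecidableEq V]

/-- `v` is an enclave of `S` if `v ∈ S` and its closed neighborhood `N[v]` is contained in `S`. -/
def IsEnclave (G : SimpleGraph V) (S : Finset V) (v : V) : Prop :=
  v ∈ S ∧ ∀ u, G.Adj v u → u ∈ S

/-- `S` is enclaveless if it contains no enclave. -/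
def IsEnclaveless (G : SimpleGraph V) (S : Finset V) : Prop :=
  ∀ v, ¬ IsEnclave G S v

instance (G : SimpleGraph V) [DecidableRel G.Adj] (S : Finset V) :
    Decidable (IsEnclaveless G S) := by
  unfold IsEnclaveless IsEnclave
  infer_instance

/-- `D` is a dominating set: every vertex lies in the closed neighborhood
of some vertex of `D`. -/
def IsDominating (G : SimpleGraph V) (D : Finset V) : Prop :=
  ∀ v, ∃ u ∈ D, u = v ∨ G.Adj u v

/-- `D` is a minimal dominating set (minimal with respect to set inclusion). -/
def IsMinimalDominating (G : SimpleGraph V) (D : Finset V) : Prop :=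
  IsDominating G D ∧ ∀ D' ⊆ D, IsDominating G D' → D' = D

/-- `S` is a maximal enclaveless set (maximal with respect to set inclusion). -/
def IsMaximalEnclaveless (G : SimpleGraph V) (S : Finset V) : Prop :=
  IsEnclaveless G S ∧ ∀ T, S ⊆ T → IsEnclaveless G T → T = S

/-- The domination number `γ(G)`: minimum cardinality of a dominating set. -/
noncomputable def domNum (G : SimpleGraph V) : ℕ :=
  sInf {k | ∃ D : Finset V, IsDominating G D ∧ D.card = k}

/-- The upper domination number `Γ(G)`: maximum cardinality of a minimal dominating set. -/
noncomputable def upperDomNum (G : SimpleGraph V) : ℕ :=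
  sSup {k | ∃ D : Finset V, IsMinimalDominating G D ∧ D.card = k}

/-- The enclaveless number `Ψ(G)`: maximum cardinality of an enclaveless set. -/
noncomputable def enclavelessNum (G : SimpleGraph V) : ℕ :=
  sSup {k | ∃ S : Finset V, IsEnclaveless G S ∧ S.card = k}

/-- The lower enclaveless number `ψ(G)`: minimum cardinality of a maximal enclaveless set. -/
noncomputable def lowerEnclavelessNum (G : SimpleGraph V) : ℕ :=
  sInf {k | ∃ S : Finset V, IsMaximalEnclaveless G S ∧ S.card = k}

/-- The set of playable vertices given the set `S` of already chosen vertices: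
vertices `v ∉ S` such that `S ∪ {v}` is enclaveless. -/
def playableSet (G : SimpleGraph V) [DecidableRel G.Adj] (S : Finset V) : Finset V :=
  Finset.univ.filter (fun v => v ∉ S ∧ IsEnclaveless G (insert v S))

/-- The value of the competition-enclaveless game from position `S`: `maxTurn = true`
means it is Maximizer's turn (this computes `MaxVal S`), and `maxTurn = false` means it
is Minimizer's turn (this computes `MinVal S`). If no vertex is playable the value is
`|S|`; otherwise it is the max (resp. min) over playable `v` of the value of
`S ∪ {v}` with the turn switched. -/
def gameVal (G : SimpleGraph V) [DecidableRel G.Adj] (maxTurn : Bool) (S : Finset V) : ℕ :=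
  if h : (playableSet G S).Nonempty then
    if maxTurn then
      (playableSet G S).attach.sup' (by simpa using h)
        (fun v => gameVal G false (insert v.1 S))
    else
      (playableSet G S).attach.inf' (by simpa using h)
        (fun v => gameVal G true (insert v.1 S))
  else S.card
termination_by Sᶜ.card
decreasing_by
  all_goals
    have hv := v.2
    simp only [playableSet, Finset.mem_filter] at hv
    rw [Finset.compl_insert]
    exact Finset.card_erase_lt_of_mem (Finset.mem_compl.mpr hv.2.1)

/-- The Maximizer-start enclaveless game number `Ψ⁺_g(G) = MaxVal ∅`. -/
def maxStartGameNum (G : SimpleGraph V) [DecidableRel G.Adj] : ℕ := gameVal G true ∅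

/-- The Minimizer-start enclaveless game number `Ψ⁻_g(G) = MinVal ∅`. -/
def minStartGameNum (G : SimpleGraph V) [DecidableRel G.Adj] : ℕ := gameVal G false ∅

lemma enclaveless_mono {G : SimpleGraph V} {S T : Finset V} (h : S ⊆ T)
    (hT : IsEnclaveless G T) : IsEnclaveless G S := by
  intro v hv
  exact hT v ⟨h hv.1, fun u hu => h (hv.2 u hu)⟩

lemma enclaveless_iff {G : SimpleGraph V} {S : Finset V} :
    IsEnclaveless G S ↔ IsDominating G Sᶜ := by
  constructor
  · intro h v
    rcases Decidable.em (v ∈ S) with hv | hv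
    · have h2 := h v
      simp only [IsEnclave, not_and, not_forall] at h2
      obtain ⟨u, hadj, hu⟩ := h2 hv
      exact ⟨u, Finset.mem_compl.mpr hu, Or.inr hadj.symm⟩
    · exact ⟨v, Finset.mem_compl.mpr hv, Or.inl rfl⟩
  · intro h v hv
    obtain ⟨u, hu, huv⟩ := h v
    rw [Finset.mem_compl] at hu
    rcases huv with rfl | hadj
    · exact hu hv.1
    · exact hu (hv.2 u hadj.symm)

lemma mem_playable {G : SimpleGraph V} [DecidableRel G.Adj] {S : Finset V} {v : V} :
    v ∈ playableSet G S ↔ v ∉ S ∧ IsEnclaveless G (insert v S) := by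
  simp [playableSet]

lemma final_card {G : SimpleGraph V} [DecidableRel G.Adj] {S : Finset V}
    (hwd : ∀ D : Finset V, IsMinimalDominating G D → D.card = domNum G)
    (hS : IsEnclaveless G S) (hnp : ¬ (playableSet G S).Nonempty) :
    S.card = Fintype.card V - domNum G := by
  have hmin : IsMinimalDominating G Sᶜ := by
    refine ⟨enclaveless_iff.mp hS, ?_⟩
    intro D' hsub hdom
    by_contra hne
    have hSsub : S ⊆ D'ᶜ := by
      intro x hx
      rw [Finset.mem_compl]
      exact fun hxD => (Finset.mem_compl.mp (hsub hxD)) hx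
    have hencl : IsEnclaveless G D'ᶜ := by
      rw [enclaveless_iff, compl_compl]; exact hdom
    have hne' : D'ᶜ ≠ S := fun h => hne (by rw [← compl_compl D', h])
    obtain ⟨v, hvD, hvS⟩ : ∃ v ∈ D'ᶜ, v ∉ S := by
      by_contra hc
      push_neg at hc
      exact hne' (Finset.Subset.antisymm hc hSsub)
    exact hnp ⟨v, mem_playable.mpr ⟨hvS,
      enclaveless_mono (Finset.insert_subset hvD hSsub) hencl⟩⟩
  have hcard := hwd Sᶜ hmin
  have := Finset.card_add_card_compl S
  omega

lemma gameVal_key {G : SimpleGraph V} [DecidableRel G.Adj]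
    (hwd : ∀ D : Finset V, IsMinimalDominating G D → D.card = domNum G) :
    ∀ n (S : Finset V), Sᶜ.card ≤ n → IsEnclaveless G S →
      ∀ b, gameVal G b S = Fintype.card V - domNum G := by
  intro n
  induction n with
  | zero =>
    intro S hle hS b
    have hnp : ¬ (playableSet G S).Nonempty := by
      rintro ⟨v, hv⟩
      have h1 := (mem_playable.mp hv).1
      have h2 : (0 : ℕ) < Sᶜ.card :=
        Finset.card_pos.mpr ⟨v, Finset.mem_compl.mpr h1⟩
      omega
    rw [gameVal, dif_neg hnp]
    exact final_card hwd hS hnp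
  | succ n ih =>
    intro S hle hS b
    rw [gameVal]
    by_cases h : (playableSet G S).Nonempty
    · rw [dif_pos h]
      have hval : ∀ v : {x // x ∈ playableSet G S}, ∀ b',
          gameVal G b' (insert v.1 S) = Fintype.card V - domNum G := by
        intro v b'
        have hv := mem_playable.mp v.2
        apply ih _ _ hv.2
        rw [Finset.compl_insert]
        have hmem : v.1 ∈ Sᶜ := Finset.mem_compl.mpr hv.1
        have := Finset.card_erase_of_mem hmem
        have := Finset.card_pos.mpr ⟨v.1, hmem⟩
        omega
      rcases b with _ | _
      · simp only [if_neg (Bool.false_ne_true)]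
        rw [show (fun v : {x // x ∈ playableSet G S} =>
          gameVal G true (insert v.1 S)) = fun _ => Fintype.card V - domNum G
          from funext fun v => hval v true, Finset.inf'_const]
      · simp only [if_pos rfl]
        rw [show (fun v : {x // x ∈ playableSet G S} =>
          gameVal G false (insert v.1 S)) = fun _ => Fintype.card V - domNum G
          from funext fun v => hval v false, Finset.sup'_const]
        simp
    · rw [dif_neg h]
      exact final_card hwd hS h

/-- If `G` is a well-dominated finite simple graph of order `n`, i.e. every minimal
dominating set has cardinality `γ(G)`, then `Ψ⁻_g(G) = Ψ⁺_g(G) = n - γ(G)`. -/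
theorem wellDominated_gameNums {V : Type*} [Fintype V] [DecidableEq V]
    (G : SimpleGraph V) [DecidableRel G.Adj]
    (hwd : ∀ D : Finset V, IsMinimalDominating G D → D.card = domNum G) :
    minStartGameNum G = Fintype.card V - domNum G ∧
    maxStartGameNum G = Fintype.card V - domNum G := by
  have hemp : IsEnclaveless G (∅ : Finset V) := fun v hv =>
    absurd hv.1 (Finset.notMem_empty v)
  have hle : (∅ : Finset V)ᶜ.card ≤ Fintype.card V := by
    simp [Finset.card_compl]
  exact ⟨gameVal_key hwd (Fintype.card V) ∅ hle hemp false,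
    gameVal_key hwd (Fintype.card V) ∅ hle hemp true⟩

end EnclavelessGame
end

section
/- If G is a finite simple graph of order n with no isolated vertex and maximum degree Δ, then n/(Δ+1) ≤ ψ(G) ≤ Ψ(G) ≤ Δn/(Δ+1); equivalently, (Δ+1)·ψ(G) ≥ n and (Δ+1)·Ψ(G) ≤ Δ·n, and ψ(G) ≤ Ψ(G). -/
namespace EnclavelessGame

variable {V : Type*} [Fintype V] [DecidableEq V]

section Aux
variable {V : Type*} [Fintype V] [DecidableEq V]

private lemma enc_bddAbove (G : SimpleGraph V) :
    BddAbove {k | ∃ S : Finset V, IsEnclaveless G S ∧ S.card = k} :=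
  ⟨Fintype.card V, fun _ ⟨S, _, hc⟩ => hc ▸ S.card_le_univ⟩

/-- a maximum-cardinality enclaveless set exists and is maximal. -/
private lemma exists_max_enclaveless (G : SimpleGraph V) :
    ∃ S : Finset V, IsMaximalEnclaveless G S ∧ S.card = enclavelessNum G := by
  have hne : {k | ∃ S : Finset V, IsEnclaveless G S ∧ S.card = k}.Nonempty :=
    ⟨0, ∅, fun v hv => by simp [IsEnclave] at hv, Finset.card_empty⟩
  obtain ⟨S, hS, hcard⟩ := Nat.sSup_mem hne (enc_bddAbove G)
  refine ⟨S, ⟨hS, fun T hST hT => ?_⟩, hcard⟩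
  have hTle : T.card ≤ S.card := by
    rw [hcard]
    exact le_csSup (enc_bddAbove G) ⟨T, hT, rfl⟩
  exact (Finset.eq_of_subset_of_card_le hST hTle).symm

/-- a maximal enclaveless set is dominating. -/
private lemma maximal_dominating (G : SimpleGraph V) (hiso : ∀ v : V, ∃ u, G.Adj v u)
    {S : Finset V} (hS : IsMaximalEnclaveless G S) : IsDominating G S := by
  intro v
  by_cases hv : v ∈ S
  · exact ⟨v, hv, Or.inl rfl⟩
  · -- insert v S is not enclaveless
    have hne : ¬ IsEnclaveless G (insert v S) := fun h => by
      have := hS.2 _ (Finset.subset_insert v S) h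
      exact hv (this ▸ Finset.mem_insert_self v S)
    rw [IsEnclaveless] at hne
    push_neg at hne
    obtain ⟨w, hwmem, hwnb⟩ := hne
    by_cases hwv : w = v
    · subst hwv
      obtain ⟨u, hu⟩ := hiso w
      have hu' : u ∈ insert w S := hwnb u hu
      have : u ∈ S := by
        rcases Finset.mem_insert.1 hu' with h | h
        · exact absurd (h ▸ hu) G.irrefl
        · exact h
      exact ⟨u, this, Or.inr hu.symm⟩
    · have hwS : w ∈ S := (Finset.mem_insert.1 hwmem).resolve_left hwv
      -- w is not an enclave of S, so it has a neighbor outside S; must be v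
      have := hS.1 w
      rw [IsEnclave] at this
      push_neg at this
      obtain ⟨u, hadj, huS⟩ := this hwS
      have : u = v := by
        rcases Finset.mem_insert.1 (hwnb u hadj) with h | h
        · exact h
        · exact absurd h huS
      exact ⟨w, hwS, Or.inr (this ▸ hadj)⟩

/-- a dominating set has card at least n/(Δ+1). -/
private lemma dominating_card (G : SimpleGraph V) [DecidableRel G.Adj]
    {S : Finset V} (hS : IsDominating G S) :
    Fintype.card V ≤ (G.maxDegree + 1) * S.card := by
  have hsub : (Finset.univ : Finset V) ⊆
      S.biUnion (fun u => insert u (G.neighborFinset u)) := by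
    intro v _
    obtain ⟨u, huS, h⟩ := hS v
    refine Finset.mem_biUnion.2 ⟨u, huS, ?_⟩
    rcases h with h | h
    · exact h ▸ Finset.mem_insert_self u _
    · exact Finset.mem_insert_of_mem ((G.mem_neighborFinset u v).2 h)
  calc Fintype.card V = (Finset.univ : Finset V).card := rfl
    _ ≤ (S.biUnion (fun u => insert u (G.neighborFinset u))).card :=
        Finset.card_le_card hsub
    _ ≤ ∑ u ∈ S, (insert u (G.neighborFinset u)).card := Finset.card_biUnion_le
    _ ≤ ∑ u ∈ S, (G.maxDegree + 1) := by
        refine Finset.sum_le_sum fun u _ => ?_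
        calc (insert u (G.neighborFinset u)).card ≤ (G.neighborFinset u).card + 1 :=
              Finset.card_insert_le _ _
          _ = G.degree u + 1 := by rw [G.card_neighborFinset_eq_degree]
          _ ≤ G.maxDegree + 1 := by
              exact Nat.add_le_add_right (G.degree_le_maxDegree u) 1
    _ = S.card * (G.maxDegree + 1) := by rw [Finset.sum_const, smul_eq_mul]
    _ = (G.maxDegree + 1) * S.card := Nat.mul_comm _ _

/-- an enclaveless set has card at most Δn/(Δ+1). -/
private lemma enclaveless_card (G : SimpleGraph V) [DecidableRel G.Adj]
    {S : Finset V} (hS : IsEnclaveless G S) :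
    (G.maxDegree + 1) * S.card ≤ G.maxDegree * Fintype.card V := by
  have hsub : S ⊆ Sᶜ.biUnion (fun u => G.neighborFinset u) := by
    intro v hv
    have := hS v
    rw [IsEnclave] at this
    push_neg at this
    obtain ⟨u, hadj, huS⟩ := this hv
    exact Finset.mem_biUnion.2 ⟨u, Finset.mem_compl.2 huS,
      (G.mem_neighborFinset u v).2 hadj.symm⟩
  have h1 : S.card ≤ G.maxDegree * Sᶜ.card := by
    calc S.card ≤ (Sᶜ.biUnion (fun u => G.neighborFinset u)).card :=
          Finset.card_le_card hsub
      _ ≤ ∑ u ∈ Sᶜ, (G.neighborFinset u).card := Finset.card_biUnion_le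
      _ ≤ ∑ u ∈ Sᶜ, G.maxDegree := Finset.sum_le_sum fun u _ => by
          rw [G.card_neighborFinset_eq_degree]; exact G.degree_le_maxDegree u
      _ = Sᶜ.card * G.maxDegree := by rw [Finset.sum_const, smul_eq_mul]
      _ = G.maxDegree * Sᶜ.card := Nat.mul_comm _ _
  have hcc : Sᶜ.card = Fintype.card V - S.card := by
    rw [Finset.card_compl]
  have hle : S.card ≤ Fintype.card V := S.card_le_univ
  calc (G.maxDegree + 1) * S.card = G.maxDegree * S.card + S.card := by ring
    _ ≤ G.maxDegree * S.card + G.maxDegree * Sᶜ.card := Nat.add_le_add_left h1 _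
    _ = G.maxDegree * (S.card + (Fintype.card V - S.card)) := by
        rw [hcc, ← Nat.mul_add]
    _ = G.maxDegree * Fintype.card V := by rw [Nat.add_sub_cancel' hle]

end Aux

/-- If `G` is an isolate-free finite simple graph of order `n` with maximum degree `Δ`,
then `n/(Δ+1) ≤ ψ(G) ≤ Ψ(G) ≤ Δn/(Δ+1)`, i.e. `(Δ+1)·ψ(G) ≥ n`, `ψ(G) ≤ Ψ(G)` and
`(Δ+1)·Ψ(G) ≤ Δ·n`. -/
theorem lowerEnclaveless_enclaveless_bounds {V : Type*} [Fintype V] [DecidableEq V]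
    (G : SimpleGraph V) [DecidableRel G.Adj]
    (hiso : ∀ v : V, ∃ u, G.Adj v u) :
    Fintype.card V ≤ (G.maxDegree + 1) * lowerEnclavelessNum G ∧
    lowerEnclavelessNum G ≤ enclavelessNum G ∧
    (G.maxDegree + 1) * enclavelessNum G ≤ G.maxDegree * Fintype.card V := by
  -- the lower enclaveless number is achieved
  have hne : {k | ∃ S : Finset V, IsMaximalEnclaveless G S ∧ S.card = k}.Nonempty := by
    obtain ⟨S, hS, hc⟩ := exists_max_enclaveless G
    exact ⟨S.card, S, hS, rfl⟩
  obtain ⟨S₀, hS₀, hc₀⟩ := Nat.sInf_mem hne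
  obtain ⟨S₁, hS₁, hc₁⟩ := exists_max_enclaveless G
  refine ⟨?_, ?_, ?_⟩
  · rw [lowerEnclavelessNum, ← hc₀]
    exact dominating_card G (maximal_dominating G hiso hS₀)
  · rw [lowerEnclavelessNum, ← hc₁]
    exact Nat.sInf_le ⟨S₁, hS₁, rfl⟩
  · rw [← hc₁]
    exact enclaveless_card G hS₁.1


end EnclavelessGame
end

section
/- If G is a finite simple graph of order n with no isolated vertex and maximum degree Δ, then the upper domination number satisfies Γ(G) ≤ Δn/(Δ+1); equivalently, (Δ+1)·Γ(G) ≤ Δ·n. -/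
namespace EnclavelessGame

variable {V : Type*} [Fintype V] [DecidableEq V]

lemma dominating_card_bound (G : SimpleGraph V) [DecidableRel G.Adj]
    (D : Finset V) (hD : IsDominating G D) :
    Fintype.card V ≤ (G.maxDegree + 1) * D.card := by
  have hsub : (Finset.univ : Finset V) ⊆
      D.biUnion (fun u => insert u (G.neighborFinset u)) := by
    intro v _
    obtain ⟨u, hu, h⟩ := hD v
    refine Finset.mem_biUnion.2 ⟨u, hu, ?_⟩
    rcases h with h | h
    · simp [h]
    · simp [Finset.mem_insert, G.mem_neighborFinset, h]
  calc Fintype.card V = (Finset.univ : Finset V).card := rfl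
    _ ≤ (D.biUnion (fun u => insert u (G.neighborFinset u))).card :=
        Finset.card_le_card hsub
    _ ≤ ∑ u ∈ D, (insert u (G.neighborFinset u)).card :=
        Finset.card_biUnion_le
    _ ≤ ∑ u ∈ D, (G.maxDegree + 1) := by
        refine Finset.sum_le_sum fun u _ => ?_
        calc (insert u (G.neighborFinset u)).card
            ≤ (G.neighborFinset u).card + 1 := Finset.card_insert_le _ _
          _ = G.degree u + 1 := by rw [G.card_neighborFinset_eq_degree]
          _ ≤ G.maxDegree + 1 := by
              exact Nat.add_le_add_right (G.degree_le_maxDegree u) 1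
    _ = (G.maxDegree + 1) * D.card := by
        rw [Finset.sum_const, smul_eq_mul, Nat.mul_comm]

lemma compl_dominating (G : SimpleGraph V) [DecidableRel G.Adj]
    (hiso : ∀ v : V, ∃ u, G.Adj v u)
    (D : Finset V) (hD : IsMinimalDominating G D) : IsDominating G Dᶜ := by
  intro v
  by_cases hv : v ∈ D
  · by_contra hcon
    push_neg at hcon
    -- every closed neighbor of v lies in D
    have hall : ∀ u, (u = v ∨ G.Adj u v) → u ∈ D := by
      intro u hu
      by_contra hnu
      obtain ⟨h1, h2⟩ := hcon u (Finset.mem_compl.2 hnu)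
      rcases hu with hu | hu
      · exact h1 hu
      · exact h2 hu
    have hdom' : IsDominating G (D.erase v) := by
      intro w
      obtain ⟨u, hu, h⟩ := hD.1 w
      by_cases huv : u = v
      · subst huv
        rcases h with h | h
        · -- w = v : use a neighbor of v
          obtain ⟨x, hx⟩ := hiso u
          have hxD : x ∈ D := hall x (Or.inr hx.symm)
          have hxv : x ≠ u := fun e => G.irrefl (e ▸ hx.symm)
          exact ⟨x, Finset.mem_erase.2 ⟨hxv, hxD⟩,
            Or.inr (h ▸ hx.symm)⟩
        · -- adj u w
          have hwD : w ∈ D := hall w (Or.inr h.symm)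
          have hwv : w ≠ u := fun e => G.irrefl (e ▸ h)
          exact ⟨w, Finset.mem_erase.2 ⟨hwv, hwD⟩, Or.inl rfl⟩
      · exact ⟨u, Finset.mem_erase.2 ⟨huv, hu⟩, h⟩
    have h2 := hD.2 (D.erase v) (Finset.erase_subset _ _) hdom'
    rw [← h2] at hv
    exact Finset.notMem_erase _ _ hv
  · exact ⟨v, Finset.mem_compl.2 hv, Or.inl rfl⟩

lemma minimal_bound (G : SimpleGraph V) [DecidableRel G.Adj]
    (hiso : ∀ v : V, ∃ u, G.Adj v u)
    (D : Finset V) (hD : IsMinimalDominating G D) :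
    (G.maxDegree + 1) * D.card ≤ G.maxDegree * Fintype.card V := by
  have h1 := dominating_card_bound G Dᶜ (compl_dominating G hiso D hD)
  have hcard : D.card + Dᶜ.card = Fintype.card V := by
    rw [Finset.card_compl]
    have := Finset.card_le_univ D
    omega
  have e : (G.maxDegree + 1) * D.card + (G.maxDegree + 1) * Dᶜ.card
      = G.maxDegree * Fintype.card V + Fintype.card V := by
    rw [← Nat.mul_add, hcard]; ring
  linarith

/-- If `G` is an isolate-free finite simple graph of order `n` with maximum degree `Δ`,
then `Γ(G) ≤ Δn/(Δ+1)`, i.e. `(Δ+1)·Γ(G) ≤ Δ·n`. -/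
theorem upperDomNum_le {V : Type*} [Fintype V] [DecidableEq V]
    (G : SimpleGraph V) [DecidableRel G.Adj]
    (hiso : ∀ v : V, ∃ u, G.Adj v u) :
    (G.maxDegree + 1) * upperDomNum G ≤ G.maxDegree * Fintype.card V := by
  unfold upperDomNum
  set s : Set ℕ := {k | ∃ D : Finset V, IsMinimalDominating G D ∧ D.card = k} with hs
  by_cases hne : s.Nonempty
  · have hbdd : BddAbove s := by
      refine ⟨Fintype.card V, fun k hk => ?_⟩
      obtain ⟨D, _, rfl⟩ := hk
      exact Finset.card_le_univ D
    obtain ⟨D, hD, hcard⟩ := Nat.sSup_mem hne hbdd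
    rw [← hcard]
    exact minimal_bound G hiso D hD
  · rw [Set.not_nonempty_iff_eq_empty] at hne
    rw [hne, csSup_empty]
    simp

end EnclavelessGame
end

section
/- If G is a finite simple graph of order n with no isolated vertex and maximum degree Δ, then n/(Δ+1) ≤ Ψ⁻_g(G) ≤ Δn/(Δ+1) and n/(Δ+1) ≤ Ψ⁺_g(G) ≤ Δn/(Δ+1); equivalently, n ≤ (Δ+1)·Ψ⁻_g(G) ≤ Δ·n and n ≤ (Δ+1)·Ψ⁺_g(G) ≤ Δ·n. -/
namespace EnclavelessGame

variable {V : Type*} [Fintype V] [DecidableEq V]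

lemma card_le_of_dominating (G : SimpleGraph V) [DecidableRel G.Adj] {D : Finset V}
    (hD : IsDominating G D) : Fintype.card V ≤ (G.maxDegree + 1) * D.card := by
  have hsub : Finset.univ ⊆ D.biUnion (fun d => insert d (G.neighborFinset d)) := by
    intro v _
    obtain ⟨u, hu, h⟩ := hD v
    refine Finset.mem_biUnion.mpr ⟨u, hu, ?_⟩
    rcases h with h | h
    · simp [h]
    · simp [Finset.mem_insert, SimpleGraph.mem_neighborFinset, h]
  calc Fintype.card V = Finset.univ.card := rfl
    _ ≤ (D.biUnion (fun d => insert d (G.neighborFinset d))).card :=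
        Finset.card_le_card hsub
    _ ≤ ∑ d ∈ D, (insert d (G.neighborFinset d)).card := Finset.card_biUnion_le
    _ ≤ ∑ _d ∈ D, (G.maxDegree + 1) := by
        refine Finset.sum_le_sum fun d _ => ?_
        have h1 : (insert d (G.neighborFinset d)).card ≤ (G.neighborFinset d).card + 1 :=
          Finset.card_insert_le _ _
        have h2 : (G.neighborFinset d).card = G.degree d := G.card_neighborFinset_eq_degree d
        have h3 := G.degree_le_maxDegree d
        omega
    _ = D.card * (G.maxDegree + 1) := by rw [Finset.sum_const, smul_eq_mul]
    _ = (G.maxDegree + 1) * D.card := Nat.mul_comm _ _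

lemma compl_dominating_s6 (G : SimpleGraph V) [DecidableRel G.Adj] {S : Finset V}
    (hS : IsEnclaveless G S) : IsDominating G Sᶜ := by
  intro v
  by_cases hv : v ∈ S
  · have := hS v
    unfold IsEnclave at this
    push_neg at this
    obtain ⟨u, huadj, huS⟩ := this hv
    exact ⟨u, Finset.mem_compl.mpr huS, Or.inr huadj.symm⟩
  · exact ⟨v, Finset.mem_compl.mpr hv, Or.inl rfl⟩

lemma dominating_of_no_playable (G : SimpleGraph V) [DecidableRel G.Adj]
    (hiso : ∀ v : V, ∃ u, G.Adj v u) {S : Finset V}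
    (hS : IsEnclaveless G S) (hp : playableSet G S = ∅) : IsDominating G S := by
  intro v
  by_cases hv : v ∈ S
  · exact ⟨v, hv, Or.inl rfl⟩
  · have hne : ¬ IsEnclaveless G (insert v S) := by
      intro h
      have : v ∈ playableSet G S := by
        simp [playableSet, hv, h]
      simp [hp] at this
    unfold IsEnclaveless at hne
    push_neg at hne
    obtain ⟨w, hwmem, hwnb⟩ := hne
    rcases Finset.mem_insert.mp hwmem with rfl | hwS
    · obtain ⟨u, hu⟩ := hiso w
      have hmem := hwnb u hu
      have hune : u ≠ w := fun h => G.irrefl (h ▸ hu)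
      have huS : u ∈ S := by
        rcases Finset.mem_insert.mp hmem with h | h
        · exact absurd h hune
        · exact h
      exact ⟨u, huS, Or.inr hu.symm⟩
    · have hw := hS w
      unfold IsEnclave at hw
      push_neg at hw
      obtain ⟨u, huadj, huS⟩ := hw hwS
      have hmem := hwnb u huadj
      have huv : u = v := by
        rcases Finset.mem_insert.mp hmem with h | h
        · exact h
        · exact absurd h huS
      exact ⟨w, hwS, Or.inr (huv ▸ huadj)⟩

lemma exists_final (G : SimpleGraph V) [DecidableRel G.Adj] (b : Bool) (S : Finset V)
    (hS : IsEnclaveless G S) :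
    ∃ T : Finset V, IsEnclaveless G T ∧ playableSet G T = ∅ ∧ gameVal G b S = T.card := by
  by_cases h : (playableSet G S).Nonempty
  · cases b with
    | true =>
      obtain ⟨v, _, heq⟩ := Finset.exists_mem_eq_sup'
        (by simpa using h : (playableSet G S).attach.Nonempty)
        (fun v : {x // x ∈ playableSet G S} => gameVal G false (insert v.1 S))
      have hv := v.2
      simp only [playableSet, Finset.mem_filter] at hv
      obtain ⟨T, hT1, hT2, hT3⟩ := exists_final G false (insert v.1 S) hv.2.2
      refine ⟨T, hT1, hT2, ?_⟩
      rw [gameVal, dif_pos h]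
      simpa [heq] using hT3
    | false =>
      obtain ⟨v, _, heq⟩ := Finset.exists_mem_eq_inf'
        (by simpa using h : (playableSet G S).attach.Nonempty)
        (fun v : {x // x ∈ playableSet G S} => gameVal G true (insert v.1 S))
      have hv := v.2
      simp only [playableSet, Finset.mem_filter] at hv
      obtain ⟨T, hT1, hT2, hT3⟩ := exists_final G true (insert v.1 S) hv.2.2
      refine ⟨T, hT1, hT2, ?_⟩
      rw [gameVal, dif_pos h]
      simpa [heq] using hT3
  · refine ⟨S, hS, Finset.not_nonempty_iff_eq_empty.mp h, ?_⟩
    rw [gameVal, dif_neg h]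
termination_by Sᶜ.card
decreasing_by
  all_goals
    have hv := v.2
    simp only [playableSet, Finset.mem_filter] at hv
    rw [Finset.compl_insert]
    exact Finset.card_erase_lt_of_mem (Finset.mem_compl.mpr hv.2.1)

lemma gameVal_bounds (G : SimpleGraph V) [DecidableRel G.Adj]
    (hiso : ∀ v : V, ∃ u, G.Adj v u) (b : Bool) :
    Fintype.card V ≤ (G.maxDegree + 1) * gameVal G b ∅ ∧
      (G.maxDegree + 1) * gameVal G b ∅ ≤ G.maxDegree * Fintype.card V := by
  have h0 : IsEnclaveless G (∅ : Finset V) := fun v hv => absurd hv.1 (Finset.notMem_empty v)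
  obtain ⟨T, hT1, hT2, hT3⟩ := exists_final G b ∅ h0
  rw [hT3]
  constructor
  · exact card_le_of_dominating G (dominating_of_no_playable G hiso hT1 hT2)
  · have hdom := card_le_of_dominating G (compl_dominating_s6 G hT1)
    have hcc : Tᶜ.card = Fintype.card V - T.card := by
      rw [Finset.card_compl]
    have hle : T.card ≤ Fintype.card V := Finset.card_le_univ T
    set a := G.maxDegree
    set n := Fintype.card V
    set s := T.card
    have key : (a + 1) * s + (a + 1) * (n - s) = (a + 1) * n := by
      rw [← Nat.mul_add, Nat.add_sub_cancel' hle]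
    rw [hcc] at hdom
    have hsum : (a + 1) * s + n ≤ (a + 1) * n :=
      le_of_le_of_eq (Nat.add_le_add_left hdom _) key
    have h2 : (a + 1) * n = a * n + n := by ring
    exact Nat.le_of_add_le_add_right (h2 ▸ hsum)

/-- If `G` is an isolate-free finite simple graph of order `n` with maximum degree `Δ`,
then `n/(Δ+1) ≤ Ψ⁻_g(G) ≤ Δn/(Δ+1)` and `n/(Δ+1) ≤ Ψ⁺_g(G) ≤ Δn/(Δ+1)`, i.e.
`n ≤ (Δ+1)·Ψ⁻_g(G) ≤ Δ·n` and `n ≤ (Δ+1)·Ψ⁺_g(G) ≤ Δ·n`. -/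
theorem gameNums_bounds {V : Type*} [Fintype V] [DecidableEq V]
    (G : SimpleGraph V) [DecidableRel G.Adj]
    (hiso : ∀ v : V, ∃ u, G.Adj v u) :
    (Fintype.card V ≤ (G.maxDegree + 1) * minStartGameNum G ∧
      (G.maxDegree + 1) * minStartGameNum G ≤ G.maxDegree * Fintype.card V) ∧
    (Fintype.card V ≤ (G.maxDegree + 1) * maxStartGameNum G ∧
      (G.maxDegree + 1) * maxStartGameNum G ≤ G.maxDegree * Fintype.card V) := by
  exact ⟨gameVal_bounds G hiso false, gameVal_bounds G hiso true⟩

end EnclavelessGame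
end

section
/- If G is a k-regular finite simple graph of order n with k ≥ 1, then Ψ⁺_g(G) ≥ n/2 and Ψ⁻_g(G) ≥ n/2; equivalently, 2·Ψ⁺_g(G) ≥ n and 2·Ψ⁻_g(G) ≥ n. -/
namespace EnclavelessGame

variable {V : Type*} [Fintype V] [DecidableEq V]

lemma card_of_maximal (G : SimpleGraph V) [DecidableRel G.Adj] {k : ℕ} (hk : 1 ≤ k)
    (hreg : G.IsRegularOfDegree k) {S : Finset V} (hS : IsEnclaveless G S)
    (hmax : ∀ v ∉ S, ¬ IsEnclaveless G (insert v S)) :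
    Fintype.card V ≤ 2 * S.card := by
  classical
  set D : Finset V := Sᶜ with hD
  -- private neighbor property
  have hpriv : ∀ v ∈ D, (∀ u, G.Adj v u → u ∈ S) ∨
      ∃ p ∈ S, G.Adj v p ∧ ∀ u, G.Adj p u → u ∉ S → u = v := by
    intro v hv
    have hvS : v ∉ S := by simpa [hD] using hv
    have hne := hmax v hvS
    rw [IsEnclaveless] at hne
    push_neg at hne
    obtain ⟨w, hw⟩ := hne
    obtain ⟨hw1, hw2⟩ := hw
    rcases Finset.mem_insert.mp hw1 with hwv | hwS
    · subst hwv
      left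
      intro u hu
      rcases Finset.mem_insert.mp (hw2 u hu) with h1 | h1
      · exact absurd (h1 ▸ hu) (G.irrefl)
      · exact h1
    · right
      have hnw := hS w
      rw [IsEnclave] at hnw
      push_neg at hnw
      obtain ⟨u, hu1, hu2⟩ := hnw hwS
      have huv : u = v := by
        rcases Finset.mem_insert.mp (hw2 u hu1) with h1 | h1
        · exact h1
        · exact absurd h1 hu2
      refine ⟨w, hwS, ?_, ?_⟩
      · exact (huv ▸ hu1).symm
      · intro x hx hxS
        rcases Finset.mem_insert.mp (hw2 x hx) with h1 | h1
        · exact h1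
        · exact absurd h1 hxS
  set A : Finset V := D.filter (fun v => ∀ u, G.Adj v u → u ∈ S) with hA
  set B : Finset V := D \ A with hB
  have hDsplit : D.card - A.card + A.card = D.card ∧ B.card = D.card - A.card := by
    constructor
    · exact Nat.sub_add_cancel (Finset.card_le_card (Finset.filter_subset _ _))
    · rw [hB]; exact Finset.card_sdiff_of_subset (Finset.filter_subset _ _)
  set T : Finset V := A.biUnion (fun a => G.neighborFinset a) with hT
  have hTS : T ⊆ S := by
    intro u hu
    rw [hT, Finset.mem_biUnion] at hu
    obtain ⟨a, ha, hu⟩ := hu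
    rw [hA, Finset.mem_filter] at ha
    exact ha.2 u (by simpa using hu)
  -- counting: |A| ≤ |T|
  have hAT : A.card ≤ T.card := by
    have key : ∀ a ∈ A, G.neighborFinset a = T.filter (fun u => G.Adj a u) := by
      intro a ha
      apply Finset.Subset.antisymm
      · intro u hu
        rw [SimpleGraph.mem_neighborFinset] at hu
        exact Finset.mem_filter.mpr ⟨Finset.mem_biUnion.mpr ⟨a, ha, by simpa using hu⟩, hu⟩
      · intro u hu
        rw [SimpleGraph.mem_neighborFinset]
        exact (Finset.mem_filter.mp hu).2
    have h1 : k * A.card = ∑ a ∈ A, (T.filter (fun u => G.Adj a u)).card := by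
      have heq : ∑ a ∈ A, (T.filter (fun u => G.Adj a u)).card = ∑ _a ∈ A, k := by
        apply Finset.sum_congr rfl
        intro a ha
        rw [← key a ha]
        exact hreg a
      rw [heq, Finset.sum_const, smul_eq_mul, Nat.mul_comm]
    have h2 : ∑ a ∈ A, (T.filter (fun u => G.Adj a u)).card
        = ∑ u ∈ T, (A.filter (fun a => G.Adj a u)).card := by
      simp only [Finset.card_filter]
      exact Finset.sum_comm
    have h3 : ∀ u ∈ T, (A.filter (fun a => G.Adj a u)).card ≤ k := by
      intro u _
      have hsub : A.filter (fun a => G.Adj a u) ⊆ G.neighborFinset u := by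
        intro a ha
        rw [SimpleGraph.mem_neighborFinset]
        exact ((Finset.mem_filter.mp ha).2).symm
      calc (A.filter (fun a => G.Adj a u)).card ≤ (G.neighborFinset u).card :=
            Finset.card_le_card hsub
        _ = k := hreg u
    have hcount : k * A.card ≤ k * T.card := by
      rw [h1, h2]
      calc ∑ u ∈ T, (A.filter (fun a => G.Adj a u)).card ≤ ∑ _u ∈ T, k :=
            Finset.sum_le_sum h3
        _ = k * T.card := by rw [Finset.sum_const, smul_eq_mul, Nat.mul_comm]
    exact Nat.le_of_mul_le_mul_left hcount (by omega)
  -- injection from B into S \ T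
  have hf : ∀ v ∈ B, ∃ p ∈ S, G.Adj v p ∧ ∀ u, G.Adj p u → u ∉ S → u = v := by
    intro v hv
    rw [hB, Finset.mem_sdiff] at hv
    rcases hpriv v hv.1 with h | h
    · exact absurd (Finset.mem_filter.mpr ⟨hv.1, h⟩) hv.2
    · exact h
  choose! f hf1 hf2 hf3 using hf
  have hfS : ∀ v ∈ B, f v ∈ S \ T := by
    intro v hv
    rw [Finset.mem_sdiff]
    refine ⟨hf1 v hv, ?_⟩
    intro hmem
    rw [hT, Finset.mem_biUnion] at hmem
    obtain ⟨a, haA, hadj⟩ := hmem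
    rw [SimpleGraph.mem_neighborFinset] at hadj
    have haD : a ∈ D := (Finset.mem_filter.mp haA).1
    have haS : a ∉ S := by simpa [hD] using haD
    have hav : a = v := hf3 v hv a hadj.symm haS
    have hvB := hv
    rw [hB, Finset.mem_sdiff] at hvB
    exact hvB.2 (hav ▸ haA)
  have hfinj : Set.InjOn f B := by
    intro v hv v' hv' he
    have hv'S : v' ∉ S := by
      have : v' ∈ D := (Finset.mem_sdiff.mp hv').1
      simpa [hD] using this
    have hadj : G.Adj (f v) v' := by
      have h := (hf2 v' hv').symm
      rwa [← he] at h
    exact (hf3 v hv v' hadj hv'S).symm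
  have hBcard : B.card ≤ (S \ T).card := Finset.card_le_card_of_injOn f hfS hfinj
  have hST : (S \ T).card = S.card - T.card := Finset.card_sdiff_of_subset hTS
  have hTcard : T.card ≤ S.card := Finset.card_le_card hTS
  have hcardV : S.card + D.card = Fintype.card V := by
    rw [hD]
    exact Finset.card_add_card_compl S
  omega

lemma gameVal_ge (G : SimpleGraph V) [DecidableRel G.Adj] {k : ℕ} (hk : 1 ≤ k)
    (hreg : G.IsRegularOfDegree k) :
    ∀ (m : ℕ) (b : Bool) (S : Finset V), Sᶜ.card = m → IsEnclaveless G S →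
      Fintype.card V ≤ 2 * gameVal G b S := by
  intro m
  induction m using Nat.strong_induction_on with
  | _ m ih =>
    intro b S hm hS
    rw [gameVal]
    by_cases h : (playableSet G S).Nonempty
    · rw [dif_pos h]
      have step : ∀ v ∈ playableSet G S, ∀ b',
          Fintype.card V ≤ 2 * gameVal G b' (insert v S) := by
        intro v hv b'
        rw [playableSet, Finset.mem_filter] at hv
        have hlt : (insert v S)ᶜ.card < m := by
          rw [Finset.compl_insert, ← hm]
          exact Finset.card_erase_lt_of_mem (Finset.mem_compl.mpr hv.2.1)
        exact ih _ hlt b' _ rfl hv.2.2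
      cases b with
      | true =>
        simp only [if_true]
        obtain ⟨v, hv⟩ := h
        have hv' : (⟨v, hv⟩ : {x // x ∈ playableSet G S}) ∈ (playableSet G S).attach :=
          Finset.mem_attach _ _
        calc Fintype.card V ≤ 2 * gameVal G false (insert v S) := step v hv false
          _ ≤ _ := Nat.mul_le_mul_left 2
              (Finset.le_sup' (fun v : {x // x ∈ playableSet G S} =>
                gameVal G false (insert v.1 S)) hv')
      | false =>
        simp only [Bool.false_eq_true, if_false]
        have hatt : (playableSet G S).attach.Nonempty := by simpa using h
        obtain ⟨w, hw, hweq⟩ := Finset.exists_mem_eq_inf'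
          hatt (fun v : {x // x ∈ playableSet G S} => gameVal G true (insert v.1 S))
        rw [hweq]
        exact step w.1 w.2 true
    · rw [dif_neg h]
      apply card_of_maximal G hk hreg hS
      intro v hvS hcon
      exact h ⟨v, Finset.mem_filter.mpr ⟨Finset.mem_univ v, hvS, hcon⟩⟩

/-- If `G` is a `k`-regular finite simple graph of order `n` with `k ≥ 1`, then
`Ψ⁺_g(G) ≥ n/2` and `Ψ⁻_g(G) ≥ n/2`, i.e. `2·Ψ⁺_g(G) ≥ n` and `2·Ψ⁻_g(G) ≥ n`. -/
theorem regular_gameNums_ge {V : Type*} [Fintype V] [DecidableEq V]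
    (G : SimpleGraph V) [DecidableRel G.Adj] (k : ℕ) (hk : 1 ≤ k)
    (hreg : G.IsRegularOfDegree k) :
    Fintype.card V ≤ 2 * maxStartGameNum G ∧ Fintype.card V ≤ 2 * minStartGameNum G := by
  have hemp : IsEnclaveless G (∅ : Finset V) := by
    intro v hv
    exact absurd hv.1 (Finset.notMem_empty v)
  exact ⟨gameVal_ge G hk hreg _ true ∅ rfl hemp, gameVal_ge G hk hreg _ false ∅ rfl hemp⟩

end EnclavelessGame
end

section
/- If G is a k-regular finite simple graph of order n with k ≥ 1, then the upper domination number satisfies Γ(G) ≤ n/2, i.e., 2·Γ(G) ≤ n. -/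
namespace EnclavelessGame

variable {V : Type*} [Fintype V] [DecidableEq V]

open Finset in
lemma exists_minimal_dominating (G : SimpleGraph V) (D : Finset V)
    (hD : IsDominating G D) : ∃ D' ⊆ D, IsMinimalDominating G D' := by
  induction D using Finset.strongInductionOn with
  | _ D ih =>
    by_cases h : ∀ D' ⊆ D, IsDominating G D' → D' = D
    · exact ⟨D, subset_rfl, hD, h⟩
    · push_neg at h
      obtain ⟨D', hsub, hdom, hne⟩ := h
      obtain ⟨E, hE, hEmin⟩ := ih D' (ssubset_of_subset_of_ne hsub hne) hdom
      exact ⟨E, hE.trans hsub, hEmin⟩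

open Finset in
lemma key_min_dom {V : Type*} [Fintype V] [DecidableEq V]
    (G : SimpleGraph V) [DecidableRel G.Adj] (k : ℕ) (hk : 1 ≤ k)
    (hreg : G.IsRegularOfDegree k) (D : Finset V) (hD : IsMinimalDominating G D) :
    2 * D.card ≤ Fintype.card V := by
  obtain ⟨hdom, hmin⟩ := hD
  -- every vertex of D has a private neighbor
  have hpriv : ∀ v, ∃ w, v ∈ D →
      (v = w ∨ G.Adj v w) ∧ ∀ u ∈ D, (u = w ∨ G.Adj u w) → u = v := by
    intro v
    by_cases hv : v ∈ D
    · have hne : ¬ IsDominating G (D.erase v) := by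
        intro h
        have := hmin (D.erase v) (erase_subset _ _) h
        rw [← this] at hv
        exact (notMem_erase v D) hv
      unfold IsDominating at hne
      push_neg at hne
      obtain ⟨w, hw⟩ := hne
      refine ⟨w, fun _ => ?_⟩
      · obtain ⟨u, hu, huw⟩ := hdom w
        have huv : u = v := by
          by_contra hne'
          obtain ⟨h1, h2⟩ := hw u (mem_erase.mpr ⟨hne', hu⟩)
          tauto
        subst huv
        refine ⟨huw, fun u hu' hud => ?_⟩
        by_contra hne'
        obtain ⟨h1, h2⟩ := hw u (mem_erase.mpr ⟨hne', hu'⟩)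
        tauto
    · exact ⟨v, fun h => absurd h hv⟩
  choose pn hpn using hpriv
  set A : Finset V := D.filter (fun v => pn v ≠ v) with hA
  set B : Finset V := D.filter (fun v => pn v = v) with hB
  -- private neighbors of A are outside D
  have hApn : ∀ a ∈ A, pn a ∉ D := by
    intro a ha hmem
    have ha' := mem_filter.mp ha
    have := (hpn a ha'.1).2 (pn a) hmem (Or.inl rfl)
    exact ha'.2 this
  -- injectivity of pn on A
  have hinj : Set.InjOn pn A := by
    intro a ha a' ha' heq
    have ha1 := (mem_filter.mp ha).1
    have ha1' := (mem_filter.mp ha').1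
    have := (hpn a' ha1').2 a ha1 (heq ▸ (hpn a ha1).1)
    exact this
  -- B-vertices have no neighbors in D
  have hBnbr : ∀ v ∈ B, ∀ u, G.Adj v u → u ∉ D := by
    intro v hv u hadj hu
    have hv' := mem_filter.mp hv
    have := (hpn v hv'.1).2 u hu (by rw [hv'.2]; exact Or.inr hadj.symm)
    exact G.irrefl (this ▸ hadj)
  set PN : Finset V := A.image pn with hPN
  set X : Finset V := univ.filter (fun u => u ∉ D ∧ ∃ v ∈ B, G.Adj v u) with hX
  have hPNcard : PN.card = A.card := card_image_of_injOn hinj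
  -- PN and X are disjoint from D
  have hPND : Disjoint PN D := by
    rw [disjoint_left]
    intro x hx hxD
    obtain ⟨a, ha, rfl⟩ := mem_image.mp hx
    exact hApn a ha hxD
  have hXD : Disjoint X D := by
    rw [disjoint_left]
    intro x hx hxD
    exact ((mem_filter.mp hx).2.1) hxD
  -- PN and X are disjoint
  have hPNX : Disjoint PN X := by
    rw [disjoint_left]
    intro x hx hxX
    obtain ⟨a, ha, rfl⟩ := mem_image.mp hx
    obtain ⟨_, ⟨v, hv, hadj⟩⟩ := (mem_filter.mp hxX).2
    have hv' := mem_filter.mp hv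
    have := (hpn a (mem_filter.mp ha).1).2 v hv'.1 (Or.inr hadj)
    have ha2 := (mem_filter.mp ha).2
    rw [this] at hv'
    exact ha2 hv'.2
  -- counting: k * B.card ≤ k * X.card
  have hcount : k * B.card ≤ k * X.card := by
    have h1 : ∀ v ∈ B, G.neighborFinset v ⊆ X := by
      intro v hv u hu
      rw [SimpleGraph.mem_neighborFinset] at hu
      exact mem_filter.mpr ⟨mem_univ _, hBnbr v hv u hu, v, hv, hu⟩
    have h2 : ∀ v ∈ B, (X.filter (fun u => G.Adj v u)).card = k := by
      intro v hv
      have : X.filter (fun u => G.Adj v u) = G.neighborFinset v := by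
        ext u
        simp only [mem_filter, SimpleGraph.mem_neighborFinset]
        exact ⟨fun h => h.2, fun h => ⟨h1 v hv (by rwa [SimpleGraph.mem_neighborFinset]), h⟩⟩
      rw [this]
      exact hreg v
    have h3 : ∀ u ∈ X, (B.filter (fun v => G.Adj v u)).card ≤ k := by
      intro u _
      have : B.filter (fun v => G.Adj v u) ⊆ G.neighborFinset u := by
        intro v hv
        rw [SimpleGraph.mem_neighborFinset]
        exact ((mem_filter.mp hv).2).symm
      calc (B.filter (fun v => G.Adj v u)).card ≤ (G.neighborFinset u).card :=
            card_le_card this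
        _ = k := hreg u
    have hswap : ∑ v ∈ B, (X.filter (fun u => G.Adj v u)).card
        = ∑ u ∈ X, (B.filter (fun v => G.Adj v u)).card := by
      simp_rw [card_filter]
      exact Finset.sum_comm
    calc k * B.card = ∑ v ∈ B, k := by rw [sum_const, smul_eq_mul, mul_comm]
      _ = ∑ v ∈ B, (X.filter (fun u => G.Adj v u)).card := by
          exact (Finset.sum_congr rfl h2).symm
      _ = ∑ u ∈ X, (B.filter (fun v => G.Adj v u)).card := hswap
      _ ≤ ∑ u ∈ X, k := Finset.sum_le_sum h3
      _ = k * X.card := by rw [sum_const, smul_eq_mul, mul_comm]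
  have hBX : B.card ≤ X.card := Nat.le_of_mul_le_mul_left hcount hk
  have hABD : A.card + B.card = D.card := by
    rw [hA, hB]
    have := card_filter_add_card_filter_not (s := D) (p := fun v => pn v ≠ v)
    simpa using this
  -- combine
  have hunion : (PN ∪ X).card + D.card ≤ Fintype.card V := by
    have hdisj : Disjoint (PN ∪ X) D := disjoint_union_left.mpr ⟨hPND, hXD⟩
    calc (PN ∪ X).card + D.card = ((PN ∪ X) ∪ D).card := (card_union_of_disjoint hdisj).symm
      _ ≤ Fintype.card V := card_le_univ _
  have hcard : D.card ≤ (PN ∪ X).card := by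
    rw [card_union_of_disjoint hPNX, hPNcard, ← hABD]
    exact Nat.add_le_add_left hBX _
  omega

/-- If `G` is a `k`-regular finite simple graph of order `n` with `k ≥ 1`, then
`Γ(G) ≤ n/2`, i.e. `2·Γ(G) ≤ n`. -/
theorem regular_upperDomNum_le {V : Type*} [Fintype V] [DecidableEq V]
    (G : SimpleGraph V) [DecidableRel G.Adj] (k : ℕ) (hk : 1 ≤ k)
    (hreg : G.IsRegularOfDegree k) :
    2 * upperDomNum G ≤ Fintype.card V := by
  have hdomuniv : IsDominating G Finset.univ := fun v => ⟨v, Finset.mem_univ v, Or.inl rfl⟩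
  obtain ⟨D₀, _, hD₀⟩ := exists_minimal_dominating G Finset.univ hdomuniv
  set S : Set ℕ := {m | ∃ D : Finset V, IsMinimalDominating G D ∧ D.card = m} with hS
  have hne : S.Nonempty := ⟨D₀.card, D₀, hD₀, rfl⟩
  have hbdd : BddAbove S := by
    refine ⟨Fintype.card V, fun m hm => ?_⟩
    obtain ⟨D, _, rfl⟩ := hm
    exact Finset.card_le_univ D
  have hmem : sSup S ∈ S := Nat.sSup_mem hne hbdd
  obtain ⟨D, hDmin, hDcard⟩ := hmem
  rw [upperDomNum, ← hS, ← hDcard]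
  exact key_min_dom G k hk hreg D hDmin

end EnclavelessGame
end

section
/- Let k be a positive integer. If G is a finite simple graph of order n with minimum degree at least k and with no induced subgraph isomorphic to the star K_{1,k+1}, then the upper domination number satisfies Γ(G) ≤ n/2, i.e., 2·Γ(G) ≤ n. -/
namespace EnclavelessGame

variable {V : Type*} [Fintype V] [DecidableEq V]

/-- Key lemma: any minimal dominating set has cardinality at most half the order. -/
lemma key_minimalDominating_card {V : Type*} [Fintype V] [DecidableEq V]
    (G : SimpleGraph V) [DecidableRel G.Adj] (k : ℕ) (hk : 1 ≤ k)
    (hdeg : ∀ v : V, k ≤ G.degree v)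
    (hstar : ¬ ∃ (v : V) (T : Finset V), T.card = k + 1 ∧ (∀ u ∈ T, G.Adj v u) ∧
        ∀ a ∈ T, ∀ b ∈ T, a ≠ b → ¬ G.Adj a b)
    (D : Finset V) (hD : IsMinimalDominating G D) :
    2 * D.card ≤ Fintype.card V := by
  classical
  -- external private neighbors of `v`
  set priv : V → Finset V := fun v =>
    Finset.univ.filter (fun u => u ∉ D ∧ G.Adj v u ∧ ∀ w ∈ D, G.Adj w u → w = v) with hprivdef
  have hpriv_mem : ∀ v u, u ∈ priv v ↔
      (u ∉ D ∧ G.Adj v u ∧ ∀ w ∈ D, G.Adj w u → w = v) := by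
    intro v u
    simp [hprivdef]
  -- Hall target sets
  set t : V → Finset V := fun v =>
    if v ∈ D then (if ∃ w ∈ D, G.Adj v w then priv v else G.neighborFinset v)
    else Finset.univ with htdef
  -- Each vertex of `D` with a neighbor in `D` has an external private neighbor.
  have hF1 : ∀ v ∈ D, (∃ w ∈ D, G.Adj v w) → (priv v).Nonempty := by
    intro v hv hnb
    have hne : D.erase v ≠ D := by
      intro h
      have := Finset.notMem_erase v D
      rw [h] at this
      exact this hv
    have hnd : ¬ IsDominating G (D.erase v) := fun h =>
      hne (hD.2 _ (Finset.erase_subset _ _) h)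
    rw [IsDominating] at hnd
    push_neg at hnd
    obtain ⟨u, hu⟩ := hnd
    obtain ⟨w₀, hw₀D, hw₀⟩ := hD.1 u
    have hw₀v : w₀ = v := by
      by_contra h
      obtain ⟨h1, h2⟩ := hu w₀ (Finset.mem_erase.mpr ⟨h, hw₀D⟩)
      rcases hw₀ with h' | h' <;> [exact h1 h'; exact h2 h']
    rw [hw₀v] at hw₀
    rcases hw₀ with h' | h'
    · -- u = v : but v has a neighbor in D, contradiction
      exfalso
      obtain ⟨w, hwD, hadj⟩ := hnb
      have hwv : w ≠ v := fun h => by simp [h] at hadj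
      exact (hu w (Finset.mem_erase.mpr ⟨hwv, hwD⟩)).2 (h' ▸ hadj.symm)
    · refine ⟨u, (hpriv_mem v u).mpr ⟨?_, h', ?_⟩⟩
      · intro huD
        have huv : u ≠ v := fun h => by simp [h] at h'
        exact (hu u (Finset.mem_erase.mpr ⟨huv, huD⟩)).1 rfl
      · intro w hwD hadj
        by_contra h
        exact (hu w (Finset.mem_erase.mpr ⟨h, hwD⟩)).2 hadj
  -- Hall's condition
  have hall : ∀ S : Finset V, S.card ≤ (S.biUnion t).card := by
    intro S
    by_cases hSD : S ⊆ D
    · set SA := S.filter (fun v => ∃ w ∈ D, G.Adj v w) with hSAdef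
      set SB := S.filter (fun v => ¬ ∃ w ∈ D, G.Adj v w) with hSBdef
      set U₁ := SA.biUnion priv with hU₁def
      set U₂ := SB.biUnion (fun b => G.neighborFinset b) with hU₂def
      -- `U₁ ∪ U₂ ⊆ S.biUnion t`
      have hsub : U₁ ∪ U₂ ⊆ S.biUnion t := by
        intro u hu
        rcases Finset.mem_union.mp hu with hu | hu
        · obtain ⟨a, ha, hua⟩ := Finset.mem_biUnion.mp hu
          obtain ⟨haS, hanb⟩ := Finset.mem_filter.mp ha
          refine Finset.mem_biUnion.mpr ⟨a, haS, ?_⟩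
          simp only [htdef, if_pos (hSD haS), if_pos hanb]
          exact hua
        · obtain ⟨b, hb, hub⟩ := Finset.mem_biUnion.mp hu
          obtain ⟨hbS, hbnb⟩ := Finset.mem_filter.mp hb
          refine Finset.mem_biUnion.mpr ⟨b, hbS, ?_⟩
          simp only [htdef, if_pos (hSD hbS), if_neg hbnb]
          exact hub
      -- disjointness of U₁ and U₂
      have hdisj : Disjoint U₁ U₂ := by
        rw [Finset.disjoint_left]
        intro u hu₁ hu₂
        obtain ⟨a, ha, hua⟩ := Finset.mem_biUnion.mp hu₁
        obtain ⟨b, hb, hub⟩ := Finset.mem_biUnion.mp hu₂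
        obtain ⟨haS, hanb⟩ := Finset.mem_filter.mp ha
        obtain ⟨hbS, hbnb⟩ := Finset.mem_filter.mp hb
        have hadjbu : G.Adj b u := G.mem_neighborFinset b u |>.mp hub
        have := ((hpriv_mem a u).mp hua).2.2 b (hSD hbS) hadjbu
        subst this
        exact hbnb hanb
      -- |SA| ≤ |U₁|
      have hA : SA.card ≤ U₁.card := by
        apply Finset.card_le_card_biUnion
        · intro a ha a' ha' hne
          simp only [Function.onFun, Finset.disjoint_left]
          intro u hua hua'
          have h1 := ((hpriv_mem a u).mp hua).2.1
          have h2 := ((hpriv_mem a' u).mp hua').2.2 a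
            (hSD (Finset.mem_filter.mp ha).1) h1
          exact hne h2
        · intro a ha
          obtain ⟨haS, hanb⟩ := Finset.mem_filter.mp ha
          exact hF1 a (hSD haS) hanb
      -- |SB| ≤ |U₂|
      have hB : SB.card ≤ U₂.card := by
        by_cases hbig : ∃ u : V, k + 1 ≤ (SB.filter (fun b => G.Adj u b)).card
        · exfalso
          obtain ⟨u, hu⟩ := hbig
          obtain ⟨T, hTsub, hTcard⟩ := Finset.exists_subset_card_eq hu
          refine hstar ⟨u, T, hTcard, ?_, ?_⟩
          · intro a haT
            exact (Finset.mem_filter.mp (hTsub haT)).2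
          · intro a haT b hbT hab
            have haSB := (Finset.mem_filter.mp (hTsub haT)).1
            have hbSB := (Finset.mem_filter.mp (hTsub hbT)).1
            have hanb := (Finset.mem_filter.mp haSB).2
            have hbD := hSD (Finset.mem_filter.mp hbSB).1
            exact fun hadj => hanb ⟨b, hbD, hadj⟩
        · push_neg at hbig
          -- double counting
          have hNsub : ∀ b ∈ SB, G.neighborFinset b ⊆ U₂ := by
            intro b hb u hu
            exact Finset.mem_biUnion.mpr ⟨b, hb, hu⟩
          have hcount : k * SB.card ≤ k * U₂.card := by
            calc k * SB.card = ∑ _b ∈ SB, k := by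
                  rw [Finset.sum_const, smul_eq_mul, mul_comm]
              _ ≤ ∑ b ∈ SB, (U₂.filter (fun u => G.Adj b u)).card := by
                  apply Finset.sum_le_sum
                  intro b hb
                  have : G.neighborFinset b ⊆ U₂.filter (fun u => G.Adj b u) := by
                    intro u hu
                    exact Finset.mem_filter.mpr ⟨hNsub b hb hu,
                      (G.mem_neighborFinset b u).mp hu⟩
                  calc k ≤ G.degree b := hdeg b
                    _ = (G.neighborFinset b).card := rfl
                    _ ≤ _ := Finset.card_le_card this
              _ = ∑ u ∈ U₂, (SB.filter (fun b => G.Adj b u)).card := by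
                  simp only [Finset.card_filter]
                  rw [Finset.sum_comm]
              _ ≤ ∑ _u ∈ U₂, k := by
                  apply Finset.sum_le_sum
                  intro u _
                  calc (SB.filter (fun b => G.Adj b u)).card
                      = (SB.filter (fun b => G.Adj u b)).card := by
                        congr 1
                        exact Finset.filter_congr (fun b _ => by rw [G.adj_comm])
                    _ ≤ k := Nat.lt_succ_iff.mp (hbig u)
              _ = k * U₂.card := by
                  rw [Finset.sum_const, smul_eq_mul, mul_comm]
          exact Nat.le_of_mul_le_mul_left hcount hk
      calc S.card = SA.card + SB.card :=
            (Finset.card_filter_add_card_filter_not _).symm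
        _ ≤ U₁.card + U₂.card := Nat.add_le_add hA hB
        _ = (U₁ ∪ U₂).card := (Finset.card_union_of_disjoint hdisj).symm
        _ ≤ (S.biUnion t).card := Finset.card_le_card hsub
    · -- S contains a vertex outside D, so the biUnion is everything
      obtain ⟨v, hvS, hvD⟩ := Finset.not_subset.mp hSD
      have : (Finset.univ : Finset V) ⊆ S.biUnion t := by
        intro u _
        refine Finset.mem_biUnion.mpr ⟨v, hvS, ?_⟩
        simp [htdef, hvD]
      calc S.card ≤ (Finset.univ : Finset V).card := Finset.card_le_univ S
        _ ≤ (S.biUnion t).card := Finset.card_le_card this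
  -- Hall's theorem gives a system of distinct representatives
  obtain ⟨f, hfinj, hft⟩ :=
    (Finset.all_card_le_biUnion_card_iff_existsInjective' t).mp hall
  -- the image of D under f is in the complement of D
  have himg : D.image f ⊆ Dᶜ := by
    intro u hu
    obtain ⟨v, hvD, rfl⟩ := Finset.mem_image.mp hu
    rw [Finset.mem_compl]
    have hfv := hft v
    by_cases hnb : ∃ w ∈ D, G.Adj v w
    · simp only [htdef, if_pos hvD, if_pos hnb] at hfv
      exact ((hpriv_mem v (f v)).mp hfv).1
    · simp only [htdef, if_pos hvD, if_neg hnb] at hfv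
      intro hfvD
      exact hnb ⟨f v, hfvD, (G.mem_neighborFinset v (f v)).mp hfv⟩
  have h1 : D.card ≤ Dᶜ.card := by
    calc D.card = (D.image f).card := (Finset.card_image_of_injective D hfinj).symm
      _ ≤ Dᶜ.card := Finset.card_le_card himg
  have h2 : Dᶜ.card = Fintype.card V - D.card := Finset.card_compl D
  have h3 : D.card ≤ Fintype.card V := Finset.card_le_univ D
  omega

/-- Let `k` be a positive integer. If `G` is a finite simple graph of order `n` with
minimum degree at least `k` and no induced `K_{1,k+1}` (no vertex has `k+1` pairwise
non-adjacent neighbors), then `Γ(G) ≤ n/2`, i.e. `2·Γ(G) ≤ n`. -/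
theorem starFree_upperDomNum_le {V : Type*} [Fintype V] [DecidableEq V]
    (G : SimpleGraph V) [DecidableRel G.Adj] (k : ℕ) (hk : 1 ≤ k)
    (hdeg : ∀ v : V, k ≤ G.degree v)
    (hstar : ¬ ∃ (v : V) (T : Finset V), T.card = k + 1 ∧ (∀ u ∈ T, G.Adj v u) ∧
        ∀ a ∈ T, ∀ b ∈ T, a ≠ b → ¬ G.Adj a b) :
    2 * upperDomNum G ≤ Fintype.card V := by
  have h : upperDomNum G ≤ Fintype.card V / 2 := by
    apply csSup_le'
    rintro c ⟨D, hD, rfl⟩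
    rw [Nat.le_div_iff_mul_le (by norm_num)]
    rw [mul_comm]
    exact key_minimalDominating_card G k hk hdeg hstar D hD
  omega

end EnclavelessGame
end

section
/- If G is a connected claw-free finite simple graph of order n with minimum degree at least 2, then the independence number satisfies α(G) ≤ 2n/(δ+2), where δ is the minimum degree of G; equivalently, (δ+2)·α(G) ≤ 2n. -/
namespace EnclavelessGame

variable {V : Type*} [Fintype V] [DecidableEq V]

/-- `S` is an independent set: no two of its vertices are adjacent. -/
def IsIndependent (G : SimpleGraph V) (S : Finset V) : Prop :=
  ∀ a ∈ S, ∀ b ∈ S, ¬ G.Adj a b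

/-- The independence number `α(G)`: maximum cardinality of an independent set. -/
noncomputable def indepNum (G : SimpleGraph V) : ℕ :=
  sSup {k | ∃ S : Finset V, IsIndependent G S ∧ S.card = k}

/-- `G` is claw-free: it contains no induced `K_{1,3}`, i.e. no vertex has three
pairwise non-adjacent neighbors. -/
def ClawFree (G : SimpleGraph V) : Prop :=
  ¬ ∃ (v : V) (T : Finset V), T.card = 3 ∧ (∀ u ∈ T, G.Adj v u) ∧
      ∀ a ∈ T, ∀ b ∈ T, a ≠ b → ¬ G.Adj a b

lemma key_bound (G : SimpleGraph V) [DecidableRel G.Adj] (hclaw : ClawFree G)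
    (S : Finset V) (hS : IsIndependent G S) :
    (G.minDegree + 2) * S.card ≤ 2 * Fintype.card V := by
  set δ := G.minDegree with hδ
  -- each neighbor set of s ∈ S lies in Sᶜ
  have hsub : ∀ s ∈ S, G.neighborFinset s = Sᶜ.filter (fun v => G.Adj s v) := by
    intro s hs
    ext v
    simp only [SimpleGraph.mem_neighborFinset, Finset.mem_filter, Finset.mem_compl]
    constructor
    · intro h
      exact ⟨fun hv => hS s hs v hv h, h⟩
    · exact fun h => h.2
  have h1 : δ * S.card ≤ ∑ s ∈ S, (Sᶜ.filter (fun v => G.Adj s v)).card := by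
    have := Finset.card_nsmul_le_sum S (fun s => (Sᶜ.filter (fun v => G.Adj s v)).card) δ
      (fun s hs => by
        show δ ≤ (Sᶜ.filter (fun v => G.Adj s v)).card
        rw [← hsub s hs, SimpleGraph.card_neighborFinset_eq_degree]
        exact G.minDegree_le_degree s)
    simpa [mul_comm] using this
  have h2 : ∑ s ∈ S, (Sᶜ.filter (fun v => G.Adj s v)).card
      = ∑ v ∈ Sᶜ, (S.filter (fun s => G.Adj s v)).card := by
    simp only [Finset.card_filter]
    rw [Finset.sum_comm]
  have h3 : ∀ v ∈ Sᶜ, (S.filter (fun s => G.Adj s v)).card ≤ 2 := by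
    intro v _
    by_contra h
    push_neg at h
    obtain ⟨T, hTsub, hT3⟩ := Finset.exists_subset_card_eq (Nat.succ_le_of_lt h)
    apply hclaw
    refine ⟨v, T, hT3, ?_, ?_⟩
    · intro u hu
      exact ((Finset.mem_filter.mp (hTsub hu)).2).symm
    · intro a ha b hb _
      exact hS a (Finset.mem_filter.mp (hTsub ha)).1 b (Finset.mem_filter.mp (hTsub hb)).1
  have h4 : δ * S.card ≤ 2 * Sᶜ.card := by
    calc δ * S.card ≤ ∑ v ∈ Sᶜ, (S.filter (fun s => G.Adj s v)).card := h1.trans (le_of_eq h2)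
    _ ≤ ∑ _v ∈ Sᶜ, 2 := Finset.sum_le_sum h3
    _ = 2 * Sᶜ.card := by rw [Finset.sum_const, smul_eq_mul, mul_comm]
  have hcard : Sᶜ.card + S.card = Fintype.card V := by
    rw [Finset.card_compl]
    exact Nat.sub_add_cancel (Finset.card_le_univ S)
  nlinarith [h4, hcard]

/-- If `G` is a connected claw-free finite simple graph of order `n` with minimum degree
`δ ≥ 2`, then `α(G) ≤ 2n/(δ+2)`, i.e. `(δ+2)·α(G) ≤ 2n`. -/
theorem clawFree_indepNum_le {V : Type*} [Fintype V] [DecidableEq V]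
    (G : SimpleGraph V) [DecidableRel G.Adj]
    (hconn : G.Connected) (hclaw : ClawFree G) (hdeg : 2 ≤ G.minDegree) :
    (G.minDegree + 2) * indepNum G ≤ 2 * Fintype.card V := by
  have hne : {k | ∃ S : Finset V, IsIndependent G S ∧ S.card = k}.Nonempty :=
    ⟨0, ∅, fun a ha => absurd ha (Finset.notMem_empty a), Finset.card_empty⟩
  have hbdd : BddAbove {k | ∃ S : Finset V, IsIndependent G S ∧ S.card = k} := by
    refine ⟨Fintype.card V, fun k hk => ?_⟩
    obtain ⟨S, _, rfl⟩ := hk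
    exact Finset.card_le_univ S
  obtain ⟨S, hSind, hScard⟩ := Nat.sSup_mem hne hbdd
  rw [indepNum, ← hScard]
  exact key_bound G hclaw S hSind

end EnclavelessGame
end

section
/- If G is a connected claw-free finite simple graph of order n ≥ 1, then the upper irredundance number satisfies IR(G) ≤ (n+1)/2, i.e., 2·IR(G) ≤ n + 1. -/
open Finset


namespace EnclavelessGame

variable {V : Type*} [Fintype V] [DecidableEq V]

/-- `S` is irredundant: every `v ∈ S` has an `S`-private neighbor, i.e. a vertex `w`
with `N[w] ∩ S = {v}`. -/
def IsIrredundant (G : SimpleGraph V) (S : Finset V) : Prop :=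
  ∀ v ∈ S, ∃ w, (w = v ∨ G.Adj w v) ∧ ∀ u ∈ S, (u = w ∨ G.Adj u w) → u = v

/-- The upper irredundance number `IR(G)`: maximum cardinality of an irredundant set. -/
noncomputable def irNum (G : SimpleGraph V) : ℕ :=
  sSup {k | ∃ S : Finset V, IsIrredundant G S ∧ S.card = k}

private lemma exists_first_step {α : Type*} {r : α → α → Prop} {x y : α}
    (h : Relation.ReflTransGen r x y) : y ≠ x → ∃ c, r x c ∧ c ≠ x := by
  induction h using Relation.ReflTransGen.head_induction_on with
  | refl => intro h; exact absurd rfl h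
  | head hac hcb ih =>
      rename_i a c
      intro _
      by_cases hca : c = a
      · subst hca
        exact ih (by assumption)
      · exact ⟨c, hac, hca⟩

open Classical in
private lemma incidence_count {α β : Type*} [DecidableEq α] [Fintype β] :
    ∀ (n : ℕ) (A : Finset α) (R : α → β → Prop), A.card = n →
      (∀ a ∈ A, ∀ a' ∈ A, Relation.ReflTransGen
        (fun u v => u ∈ A ∧ v ∈ A ∧ ∃ b, R u b ∧ R v b) a a') →
      A.card ≤ 1 + ∑ b : β, ((A.filter (fun a => R a b)).card - 1) := by
  intro n
  induction n using Nat.strong_induction_on with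
  | _ n ih =>
    intro A R hcard hconn
    by_cases h1 : A.card ≤ 1
    · exact h1.trans (Nat.le_add_right 1 _)
    push_neg at h1
    obtain ⟨a0, ha0, a', ha', hne⟩ := Finset.one_lt_card.mp h1
    obtain ⟨a1, hstep, hne1⟩ := exists_first_step (hconn a0 ha0 a' ha') (Ne.symm hne)
    obtain ⟨-, ha1, b0, hRa0, hRa1⟩ := hstep
    set A' := A.erase a0 with hA'
    set R' : α → β → Prop := fun u b => R u b ∨ (u = a1 ∧ R a0 b) with hR'
    have ha1A' : a1 ∈ A' := Finset.mem_erase.mpr ⟨hne1, ha1⟩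
    -- mapping chains
    have hmap : ∀ {u v : α}, Relation.ReflTransGen
        (fun u v => u ∈ A ∧ v ∈ A ∧ ∃ b, R u b ∧ R v b) u v →
        Relation.ReflTransGen
          (fun u v => u ∈ A' ∧ v ∈ A' ∧ ∃ b, R' u b ∧ R' v b)
          (if u = a0 then a1 else u) (if v = a0 then a1 else v) := by
      intro u v h
      induction h with
      | refl => exact .refl
      | tail h1 h2 ih2 =>
          refine ih2.tail ?_
          obtain ⟨hwA, hvA, b, hRw, hRv⟩ := h2
          refine ⟨?_, ?_, b, ?_, ?_⟩
          · split
            · exact ha1A'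
            · exact Finset.mem_erase.mpr ⟨by assumption, hwA⟩
          · split
            · exact ha1A'
            · exact Finset.mem_erase.mpr ⟨by assumption, hvA⟩
          · split
            · rename_i hw; exact Or.inr ⟨rfl, hw ▸ hRw⟩
            · exact Or.inl hRw
          · split
            · rename_i hv; exact Or.inr ⟨rfl, hv ▸ hRv⟩
            · exact Or.inl hRv
    have hconn' : ∀ a ∈ A', ∀ a' ∈ A', Relation.ReflTransGen
        (fun u v => u ∈ A' ∧ v ∈ A' ∧ ∃ b, R' u b ∧ R' v b) a a' := by
      intro u hu v hv
      have h := hmap (hconn u (Finset.mem_of_mem_erase hu) v (Finset.mem_of_mem_erase hv))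
      rwa [if_neg (Finset.ne_of_mem_erase hu), if_neg (Finset.ne_of_mem_erase hv)] at h
    have hcard' : A'.card = n - 1 := by rw [hA', Finset.card_erase_of_mem ha0, hcard]
    have hlt : n - 1 < n := by omega
    have hIH0 := ih (n - 1) hlt A' R' hcard' hconn'
    have hIH : A'.card ≤ 1 + ∑ b : β, ((A'.filter (fun a => R' a b)).card - 1) := by
      refine hIH0.trans (le_of_eq ?_)
      congr 1
      exact Finset.sum_congr rfl fun b _ => by rw [Finset.filter_congr_decidable]
    -- filter facts
    have hkey1 : A'.filter (fun a => R' a b0) = (A.filter (fun a => R a b0)).erase a0 := by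
      ext a
      simp only [Finset.mem_filter, Finset.mem_erase, hR', hA']
      constructor
      · rintro ⟨⟨hna, haA⟩, hR | ⟨rfl, _⟩⟩
        · exact ⟨hna, haA, hR⟩
        · exact ⟨hna, haA, hRa1⟩
      · rintro ⟨hna, haA, hR⟩
        exact ⟨⟨hna, haA⟩, Or.inl hR⟩
    have ha0f : a0 ∈ A.filter (fun a => R a b0) := Finset.mem_filter.mpr ⟨ha0, hRa0⟩
    have ha1f : a1 ∈ A.filter (fun a => R a b0) := Finset.mem_filter.mpr ⟨ha1, hRa1⟩
    have hd0 : 1 < (A.filter (fun a => R a b0)).card :=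
      Finset.one_lt_card.mpr ⟨a0, ha0f, a1, ha1f, Ne.symm hne1⟩
    have hd0' : (A'.filter (fun a => R' a b0)).card = (A.filter (fun a => R a b0)).card - 1 := by
      rw [hkey1, Finset.card_erase_of_mem ha0f]
    have ha1f' : a1 ∈ A'.filter (fun a => R' a b0) :=
      Finset.mem_filter.mpr ⟨ha1A', Or.inl hRa1⟩
    have hd0pos : 1 ≤ (A'.filter (fun a => R' a b0)).card := Finset.card_pos.mpr ⟨a1, ha1f'⟩
    have hkey2 : ∀ b, (A'.filter (fun a => R' a b)).card ≤ (A.filter (fun a => R a b)).card := by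
      intro b
      by_cases hb : R a0 b
      · have hsub : A'.filter (fun a => R' a b) ⊆
            insert a1 ((A.filter (fun a => R a b)).erase a0) := by
          intro a ha
          obtain ⟨haA', hR | ⟨rfl, _⟩⟩ := Finset.mem_filter.mp ha
          · exact Finset.mem_insert_of_mem (Finset.mem_erase.mpr
              ⟨Finset.ne_of_mem_erase haA', Finset.mem_filter.mpr
                ⟨Finset.mem_of_mem_erase haA', hR⟩⟩)
          · exact Finset.mem_insert_self _ _
        calc (A'.filter (fun a => R' a b)).card
            ≤ (insert a1 ((A.filter (fun a => R a b)).erase a0)).card :=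
              Finset.card_le_card hsub
          _ ≤ ((A.filter (fun a => R a b)).erase a0).card + 1 := Finset.card_insert_le _ _
          _ ≤ (A.filter (fun a => R a b)).card := by
              rw [Finset.card_erase_of_mem (Finset.mem_filter.mpr ⟨ha0, hb⟩)]
              have : 1 ≤ (A.filter (fun a => R a b)).card :=
                Finset.card_pos.mpr ⟨a0, Finset.mem_filter.mpr ⟨ha0, hb⟩⟩
              omega
      · apply Finset.card_le_card
        intro a ha
        obtain ⟨haA', hR | ⟨rfl, h0⟩⟩ := Finset.mem_filter.mp ha
        · exact Finset.mem_filter.mpr ⟨Finset.mem_of_mem_erase haA', hR⟩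
        · exact absurd h0 hb
    -- sum comparison
    have hsum : (∑ b : β, ((A'.filter (fun a => R' a b)).card - 1)) + 1 ≤
        ∑ b : β, ((A.filter (fun a => R a b)).card - 1) := by
      rw [← Finset.sum_erase_add Finset.univ _ (Finset.mem_univ b0),
          ← Finset.sum_erase_add Finset.univ
            (fun b => ((A.filter (fun a => R a b)).card - 1)) (Finset.mem_univ b0)]
      have hrest : ∑ b ∈ Finset.univ.erase b0, ((A'.filter (fun a => R' a b)).card - 1) ≤
          ∑ b ∈ Finset.univ.erase b0, ((A.filter (fun a => R a b)).card - 1) :=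
        Finset.sum_le_sum fun b _ => Nat.sub_le_sub_right (hkey2 b) 1
      have : ((A'.filter (fun a => R' a b0)).card - 1) + 1 ≤
          (A.filter (fun a => R a b0)).card - 1 := by omega
      omega
    have heq : A.card = A'.card + 1 := by
      rw [hcard', hcard]; omega
    calc A.card = A'.card + 1 := heq
      _ ≤ (1 + ∑ b : β, ((A'.filter (fun a => R' a b)).card - 1)) + 1 :=
          Nat.add_le_add_right hIH 1
      _ = 1 + ((∑ b : β, ((A'.filter (fun a => R' a b)).card - 1)) + 1) := by omega
      _ ≤ 1 + ∑ b : β, ((A.filter (fun a => R a b)).card - 1) :=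
          Nat.add_le_add_left hsum 1


private inductive Grown (G : SimpleGraph V) : Finset V → Prop
  | single (x : V) : Grown G {x}
  | grow {D : Finset V} {x y : V} (hD : Grown G D) (hx : x ∉ D) (hy : y ∈ D)
      (hadj : G.Adj x y) : Grown G (insert x D)

open Classical in
private lemma blob_bound {G : SimpleGraph V} (hclaw : ClawFree G) (A X : Finset V)
    (hAX : ∀ a ∈ A, ∀ y, G.Adj a y → y ∈ X) (hdisj : ∀ a ∈ A, a ∉ X) :
    ∀ D : Finset V, Grown G D → (∀ z ∈ D, z ∉ A) →
      (A.filter (fun a => ∃ x ∈ D, G.Adj a x)).card ≤ (D ∩ X).card + 1 := by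
  have hAA : ∀ a ∈ A, ∀ b ∈ A, ¬ G.Adj a b := by
    intro a ha b hb hadj
    exact hdisj b hb (hAX a ha b hadj)
  intro D hG
  induction hG with
  | single x =>
      intro _
      have hsub : A.filter (fun a => ∃ z ∈ ({x} : Finset V), G.Adj a z)
          = A.filter (fun a => G.Adj a x) := by
        apply Finset.filter_congr
        intro a _
        simp
      rw [hsub]
      by_cases hxX : x ∈ X
      · rw [Finset.singleton_inter_of_mem hxX, Finset.card_singleton]
        by_contra hgt
        push_neg at hgt
        have hgt2 : 2 < (A.filter (fun a => G.Adj a x)).card := by omega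
        obtain ⟨a, b, c, ha, hb, hc, hab, hac, hbc⟩ := Finset.two_lt_card_iff.mp hgt2
        obtain ⟨haA, hax⟩ := Finset.mem_filter.mp ha
        obtain ⟨hbA, hbx⟩ := Finset.mem_filter.mp hb
        obtain ⟨hcA, hcx⟩ := Finset.mem_filter.mp hc
        refine hclaw ⟨x, {a, b, c},
          Finset.card_eq_three.mpr ⟨a, b, c, hab, hac, hbc, rfl⟩, ?_, ?_⟩
        · intro u hu
          simp only [Finset.mem_insert, Finset.mem_singleton] at hu
          rcases hu with rfl | rfl | rfl
          exacts [hax.symm, hbx.symm, hcx.symm]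
        · intro u hu v hv _
          simp only [Finset.mem_insert, Finset.mem_singleton] at hu hv
          have huA : u ∈ A := by rcases hu with rfl | rfl | rfl <;> assumption
          have hvA : v ∈ A := by rcases hv with rfl | rfl | rfl <;> assumption
          exact hAA u huA v hvA
      · rw [Finset.singleton_inter_of_notMem hxX]
        have hemp : A.filter (fun a => G.Adj a x) = ∅ := by
          rw [Finset.filter_eq_empty_iff]
          intro a haA hadj
          exact hxX (hAX a haA x hadj)
        rw [hemp]
        simp
  | grow hD hx hy hadj ih =>
      rename_i D x y
      intro hzA
      have hDA : ∀ z ∈ D, z ∉ A := fun z hz => hzA z (Finset.mem_insert_of_mem hz)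
      have hxA : x ∉ A := hzA x (Finset.mem_insert_self x D)
      have hIH := ih hDA
      set F := A.filter (fun a => ∃ z ∈ insert x D, G.Adj a z) with hF
      set FD := A.filter (fun a => ∃ z ∈ D, G.Adj a z) with hFD
      have hnew : ∀ a ∈ F \ FD, a ∈ A ∧ G.Adj a x := by
        intro a ha
        obtain ⟨haF, hanFD⟩ := Finset.mem_sdiff.mp ha
        obtain ⟨haA, z, hz, hadjz⟩ := Finset.mem_filter.mp haF
        rcases Finset.mem_insert.mp hz with rfl | hzD
        · exact ⟨haA, hadjz⟩
        · exact absurd (Finset.mem_filter.mpr ⟨haA, z, hzD, hadjz⟩) hanFD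
      have hcardle : F.card ≤ (F \ FD).card + FD.card := Finset.card_le_card_sdiff_add_card
      by_cases hxX : x ∈ X
      · have hone : (F \ FD).card ≤ 1 := by
          rw [Finset.card_le_one]
          intro a ha b hb
          by_contra hab
          obtain ⟨haA, hax⟩ := hnew a ha
          obtain ⟨hbA, hbx⟩ := hnew b hb
          have hya : y ≠ a := fun h => (hDA y hy) (h ▸ haA)
          have hyb : y ≠ b := fun h => (hDA y hy) (h ▸ hbA)
          refine hclaw ⟨x, {a, b, y}, ?_, ?_, ?_⟩
          · exact Finset.card_eq_three.mpr ⟨a, b, y, hab, Ne.symm hya, Ne.symm hyb, rfl⟩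
          · intro u hu
            simp only [Finset.mem_insert, Finset.mem_singleton] at hu
            rcases hu with rfl | rfl | rfl
            · exact hax.symm
            · exact hbx.symm
            · exact hadj
          · intro u hu v hv huv
            simp only [Finset.mem_insert, Finset.mem_singleton] at hu hv
            intro hadjuv
            rcases hu with rfl | rfl | rfl <;> rcases hv with rfl | rfl | rfl
            · exact huv rfl
            · exact hAA u haA v hbA hadjuv
            · exact (Finset.mem_sdiff.mp ha).2
                (Finset.mem_filter.mpr ⟨haA, v, hy, hadjuv⟩)
            · exact hAA u hbA v haA hadjuv
            · exact huv rfl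
            · exact (Finset.mem_sdiff.mp hb).2
                (Finset.mem_filter.mpr ⟨hbA, v, hy, hadjuv⟩)
            · exact (Finset.mem_sdiff.mp ha).2
                (Finset.mem_filter.mpr ⟨haA, u, hy, hadjuv.symm⟩)
            · exact (Finset.mem_sdiff.mp hb).2
                (Finset.mem_filter.mpr ⟨hbA, u, hy, hadjuv.symm⟩)
            · exact huv rfl
        have hins : insert x D ∩ X = insert x (D ∩ X) := by
          rw [Finset.insert_inter_of_mem hxX]
        have hxDX : x ∉ D ∩ X := fun h => hx (Finset.mem_of_mem_inter_left h)
        rw [hins, Finset.card_insert_of_notMem hxDX]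
        omega
      · have hzero : F \ FD = ∅ := by
          rw [Finset.eq_empty_iff_forall_notMem]
          intro a ha
          obtain ⟨haA, hax⟩ := hnew a ha
          exact hxX (hAX a haA x hax)
        have hins : insert x D ∩ X = D ∩ X := by
          rw [Finset.insert_inter_of_notMem hxX]
        rw [hins]
        rw [hzero] at hcardle
        simp only [Finset.card_empty, Nat.zero_add] at hcardle
        exact hcardle.trans hIH

private lemma exists_boundary {G : SimpleGraph V} {D E : Finset V} :
    ∀ {w t : V} (p : G.Walk w t), (∀ z ∈ p.support, z ∈ D) → w ∉ E → t ∈ E →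
      ∃ z, z ∈ D ∧ z ∉ E ∧ ∃ w' ∈ E, G.Adj z w' := by
  intro w t p
  induction p with
  | nil => intro _ hw ht; exact absurd ht hw
  | cons h q ih =>
      rename_i u v t'
      intro hsupp hw ht
      by_cases hv : v ∈ E
      · exact ⟨u, hsupp u (SimpleGraph.Walk.start_mem_support _), hw, v, hv, h⟩
      · refine ih (fun z hz => hsupp z ?_) hv ht
        rw [SimpleGraph.Walk.support_cons]
        exact List.mem_cons_of_mem _ hz

private lemma grown_of_connected {G : SimpleGraph V} {D : Finset V}
    (hconnD : ∀ x ∈ D, ∀ y ∈ D, ∃ p : G.Walk x y, ∀ w ∈ p.support, w ∈ D)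
    (hne : D.Nonempty) : Grown G D := by
  obtain ⟨x0, hx0⟩ := hne
  suffices h : ∀ k (E : Finset V), E ⊆ D → x0 ∈ E → Grown G E → (D \ E).card = k →
      Grown G D by
    exact h (D \ {x0}).card {x0} (Finset.singleton_subset_iff.mpr hx0)
      (Finset.mem_singleton_self x0) (Grown.single x0) rfl
  intro k
  induction k with
  | zero =>
      intro E hE hx0E hG hcard
      have hDE : D = E := by
        apply Finset.Subset.antisymm _ hE
        intro z hz
        by_contra hzE
        have : z ∈ D \ E := Finset.mem_sdiff.mpr ⟨hz, hzE⟩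
        rw [Finset.card_eq_zero.mp hcard] at this
        exact absurd this (Finset.notMem_empty z)
      exact hDE ▸ hG
  | succ k ihk =>
      intro E hE hx0E hG hcard
      have hne' : (D \ E).Nonempty := Finset.card_pos.mp (by omega)
      obtain ⟨y, hy⟩ := hne'
      obtain ⟨hyD, hyE⟩ := Finset.mem_sdiff.mp hy
      obtain ⟨p, hp⟩ := hconnD y hyD x0 hx0
      obtain ⟨z, hzD, hzE, w', hw'E, hadj⟩ := exists_boundary p hp hyE hx0E
      refine ihk (insert z E) (Finset.insert_subset hzD hE)
        (Finset.mem_insert_of_mem hx0E) (Grown.grow hG hzE hw'E hadj) ?_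
      have heq : D \ insert z E = (D \ E).erase z := by
        ext a
        simp only [Finset.mem_sdiff, Finset.mem_erase, Finset.mem_insert]
        tauto
      rw [heq, Finset.card_erase_of_mem (Finset.mem_sdiff.mpr ⟨hzD, hzE⟩), hcard]
      omega

private lemma walk_support_reachable {G' : SimpleGraph V} :
    ∀ {x y : V} (p : G'.Walk x y), ∀ w ∈ p.support, G'.Reachable x w := by
  intro x y p
  induction p with
  | nil =>
      intro w hw
      rw [SimpleGraph.Walk.support_nil, List.mem_singleton] at hw
      subst hw
      exact SimpleGraph.Reachable.refl w
  | cons h q ih =>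
      intro w hw
      rw [SimpleGraph.Walk.support_cons] at hw
      rcases List.mem_cons.mp hw with rfl | hw'
      · exact SimpleGraph.Reachable.refl w
      · exact (SimpleGraph.Adj.reachable h).trans (ih w hw')

open Classical in
private lemma main_bound {G : SimpleGraph V} (hconn : G.Connected) (hclaw : ClawFree G)
    (A X : Finset V) (hAX : ∀ a ∈ A, ∀ y, G.Adj a y → y ∈ X)
    (hdisj : ∀ a ∈ A, a ∉ X) : A.card ≤ X.card + 1 := by
  set G' : SimpleGraph V := {
    Adj := fun u v => G.Adj u v ∧ u ∉ A ∧ v ∉ A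
    symm := ⟨by rintro u v ⟨h, hu, hv⟩; exact ⟨h.symm, hv, hu⟩⟩
    loopless := ⟨by rintro v ⟨h, _, _⟩; exact G.loopless.irrefl v h⟩ } with hG'
  haveI : Fintype G'.ConnectedComponent := Fintype.ofFinite _
  set mk : V → G'.ConnectedComponent := G'.connectedComponentMk with hmk
  set R : V → G'.ConnectedComponent → Prop :=
    fun a c => ∃ x, mk x = c ∧ x ∉ A ∧ G.Adj a x with hR
  -- support of a G'-walk starting outside A stays outside A
  have hsuppA : ∀ {x y : V} (p : G'.Walk x y), x ∉ A → ∀ w ∈ p.support, w ∉ A := by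
    intro x y p
    induction p with
    | nil =>
        intro hx w hw
        rw [SimpleGraph.Walk.support_nil, List.mem_singleton] at hw
        exact hw ▸ hx
    | cons h q ih =>
        intro hx w hw
        rw [SimpleGraph.Walk.support_cons] at hw
        rcases List.mem_cons.mp hw with rfl | hw'
        · exact hx
        · exact ih h.2.2 w hw'
  -- convert a G'-walk into a G-walk with the same support
  have hconv : ∀ {x y : V} (p : G'.Walk x y), ∃ q : G.Walk x y, q.support = p.support := by
    intro x y p
    induction p with
    | nil => exact ⟨SimpleGraph.Walk.nil, rfl⟩
    | cons h q ih =>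
        obtain ⟨q', hq'⟩ := ih
        exact ⟨SimpleGraph.Walk.cons h.1 q', by
          rw [SimpleGraph.Walk.support_cons, SimpleGraph.Walk.support_cons, hq']⟩
  -- incidence connectivity via walks
  have walkchain : ∀ (a' u : V) (p : G.Walk u a'), a' ∈ A →
      (u ∈ A → Relation.ReflTransGen
        (fun u v => u ∈ A ∧ v ∈ A ∧ ∃ b, R u b ∧ R v b) u a') ∧
      (u ∉ A → ∃ a'', a'' ∈ A ∧ R a'' (mk u) ∧ Relation.ReflTransGen
        (fun u v => u ∈ A ∧ v ∈ A ∧ ∃ b, R u b ∧ R v b) a'' a') := by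
    intro a' u p
    induction p with
    | nil =>
        intro ha'
        exact ⟨fun _ => Relation.ReflTransGen.refl, fun h => absurd ha' h⟩
    | cons h q ih =>
        rename_i u' v w'
        intro ha'
        constructor
        · intro hu
          have hvA : v ∉ A := fun hvA => hdisj v hvA (hAX u' hu v h)
          obtain ⟨a'', ha'', hR'', hrtg⟩ := (ih ha').2 hvA
          exact Relation.ReflTransGen.head
            ⟨hu, ha'', mk v, ⟨v, rfl, hvA, h⟩, hR''⟩ hrtg
        · intro hu
          by_cases hv : v ∈ A
          · exact ⟨v, hv, ⟨u', rfl, hu, h.symm⟩, (ih ha').1 hv⟩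
          · obtain ⟨a'', ha'', hR'', hrtg⟩ := (ih ha').2 hv
            have hmkeq : mk u' = mk v :=
              SimpleGraph.ConnectedComponent.sound ⟨SimpleGraph.Walk.cons
                (show G'.Adj u' v from ⟨h, hu, hv⟩) SimpleGraph.Walk.nil⟩
            exact ⟨a'', ha'', hmkeq ▸ hR'', hrtg⟩
  have hconnR : ∀ a ∈ A, ∀ a' ∈ A, Relation.ReflTransGen
      (fun u v => u ∈ A ∧ v ∈ A ∧ ∃ b, R u b ∧ R v b) a a' := by
    intro a ha a' ha'
    exact (hconn.preconnected a a').elim fun p => (walkchain a' a p ha').1 ha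
  have hinc0 := incidence_count A.card A R rfl hconnR
  have hinc : A.card ≤ 1 + ∑ c : G'.ConnectedComponent,
      ((A.filter (fun a => R a c)).card - 1) := by
    refine hinc0.trans (le_of_eq ?_)
    congr 1
    exact Finset.sum_congr rfl fun b _ => by rw [Finset.filter_congr_decidable]
  -- per-component bound
  have hdeg : ∀ c : G'.ConnectedComponent,
      (A.filter (fun a => R a c)).card - 1 ≤ (X.filter (fun x => mk x = c)).card := by
    intro c
    set D : Finset V := Finset.univ.filter (fun z => mk z = c ∧ z ∉ A) with hD
    by_cases hDe : D.Nonempty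
    · have hDA : ∀ z ∈ D, z ∉ A := by
        intro z hz
        exact (Finset.mem_filter.mp hz).2.2
      have hconnD : ∀ x ∈ D, ∀ y ∈ D, ∃ p : G.Walk x y, ∀ w ∈ p.support, w ∈ D := by
        intro x hx y hy
        obtain ⟨hxc, hxA⟩ := (Finset.mem_filter.mp hx).2
        obtain ⟨hyc, hyA⟩ := (Finset.mem_filter.mp hy).2
        have hreach : G'.Reachable x y := by
          rw [← SimpleGraph.ConnectedComponent.eq]
          exact hxc.trans hyc.symm
        refine hreach.elim fun p' => ?_
        obtain ⟨q, hq⟩ := hconv p'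
        refine ⟨q, fun w hw => ?_⟩
        rw [hq] at hw
        have hwA : w ∉ A := hsuppA p' hxA w hw
        have hwreach : G'.Reachable x w := walk_support_reachable p' w hw
        refine Finset.mem_filter.mpr ⟨Finset.mem_univ w, ?_, hwA⟩
        rw [← hxc]
        exact (SimpleGraph.ConnectedComponent.sound hwreach).symm
      have hGrown : Grown G D := grown_of_connected hconnD hDe
      have hblob := blob_bound hclaw A X hAX hdisj D hGrown hDA
      have hfeq : A.filter (fun a => R a c) = A.filter (fun a => ∃ x ∈ D, G.Adj a x) := by
        apply Finset.filter_congr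
        intro a _
        constructor
        · rintro ⟨x, hxc, hxA, hadj⟩
          exact ⟨x, Finset.mem_filter.mpr ⟨Finset.mem_univ x, hxc, hxA⟩, hadj⟩
        · rintro ⟨x, hx, hadj⟩
          obtain ⟨hxc, hxA⟩ := (Finset.mem_filter.mp hx).2
          exact ⟨x, hxc, hxA, hadj⟩
      have hXeq : D ∩ X = X.filter (fun x => mk x = c) := by
        ext z
        simp only [Finset.mem_inter, Finset.mem_filter, Finset.mem_univ, true_and, hD]
        constructor
        · rintro ⟨⟨hzc, _⟩, hzX⟩
          exact ⟨hzX, hzc⟩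
        · rintro ⟨hzX, hzc⟩
          exact ⟨⟨hzc, fun hzA => hdisj z hzA hzX⟩, hzX⟩
      rw [hfeq] at *
      rw [hXeq] at hblob
      omega
    · have hfe : A.filter (fun a => R a c) = ∅ := by
        rw [Finset.filter_eq_empty_iff]
        rintro a _ ⟨x, hxc, hxA, _⟩
        exact hDe ⟨x, Finset.mem_filter.mpr ⟨Finset.mem_univ x, hxc, hxA⟩⟩
      rw [hfe]
      simp
  calc A.card ≤ 1 + ∑ c : G'.ConnectedComponent,
        ((A.filter (fun a => R a c)).card - 1) := hinc
    _ ≤ 1 + ∑ c : G'.ConnectedComponent,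
        (X.filter (fun x => mk x = c)).card := by
          exact Nat.add_le_add_left (Finset.sum_le_sum fun c _ => hdeg c) 1
    _ = 1 + X.card := by
          rw [← Finset.card_eq_sum_card_fiberwise
            (fun x (_ : x ∈ X) => Finset.mem_univ (mk x))]
    _ = X.card + 1 := Nat.add_comm 1 X.card

open Classical in
private lemma irred_bound {G : SimpleGraph V} (hconn : G.Connected) (hclaw : ClawFree G)
    (S : Finset V) (hSirr : IsIrredundant G S) :
    2 * S.card ≤ Fintype.card V + 1 := by
  set A : Finset V := S.filter (fun v => ∀ u ∈ S, ¬ G.Adj u v) with hA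
  set B : Finset V := S \ A with hB
  have hBpriv : ∀ b ∈ B, ∃ w, G.Adj w b ∧ w ∉ S ∧
      ∀ u ∈ S, (u = w ∨ G.Adj u w) → u = b := by
    intro b hb
    obtain ⟨hbS, hbA⟩ := Finset.mem_sdiff.mp hb
    obtain ⟨w, hw1, hw2⟩ := hSirr b hbS
    have hnotiso : ¬ (∀ u ∈ S, ¬ G.Adj u b) := by
      intro hiso
      exact hbA (Finset.mem_filter.mpr ⟨hbS, hiso⟩)
    push_neg at hnotiso
    obtain ⟨u0, hu0S, hu0adj⟩ := hnotiso
    have hwb : w ≠ b := by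
      rintro rfl
      have : u0 = w := hw2 u0 hu0S (Or.inr hu0adj)
      exact G.loopless.irrefl w (this ▸ hu0adj)
    have hwadj : G.Adj w b := by
      rcases hw1 with rfl | h
      · exact absurd rfl hwb
      · exact h
    have hwS : w ∉ S := by
      intro hwS
      exact hwb (hw2 w hwS (Or.inl rfl))
    exact ⟨w, hwadj, hwS, hw2⟩
  set f : V → V := fun b => if h : b ∈ B then Classical.choose (hBpriv b h) else b with hf
  have hfspec : ∀ b (h : b ∈ B), G.Adj (f b) b ∧ f b ∉ S ∧
      ∀ u ∈ S, (u = f b ∨ G.Adj u (f b)) → u = b := by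
    intro b h
    simp only [hf, dif_pos h]
    exact Classical.choose_spec (hBpriv b h)
  have hBsubS : B ⊆ S := Finset.sdiff_subset
  have hfinj : Set.InjOn f B := by
    intro b hb b' hb' heq
    have h1 := hfspec b hb
    have h2 := hfspec b' hb'
    have hbS : b ∈ S := hBsubS hb
    have : b = b' := h2.2.2 b hbS (Or.inr (heq ▸ h1.1.symm))
    exact this
  set Bf : Finset V := B.image f with hBf
  have hcardBf : Bf.card = B.card := Finset.card_image_of_injOn hfinj
  have hdisjSBf : Disjoint S Bf := by
    rw [Finset.disjoint_right]
    intro y hy hyS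
    obtain ⟨b, hb, rfl⟩ := Finset.mem_image.mp hy
    exact (hfspec b hb).2.1 hyS
  set Rset : Finset V := S ∪ Bf with hRset
  have hcardR : Rset.card = S.card + B.card := by
    rw [hRset, Finset.card_union_of_disjoint hdisjSBf, hcardBf]
  set X : Finset V := Rsetᶜ with hX
  have hAX : ∀ a ∈ A, ∀ y, G.Adj a y → y ∈ X := by
    intro a ha y hadj
    obtain ⟨haS, haiso⟩ := Finset.mem_filter.mp ha
    have hyS : y ∉ S := fun hyS => haiso y hyS hadj.symm
    have hyBf : y ∉ Bf := by
      intro hyBf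
      obtain ⟨b, hb, rfl⟩ := Finset.mem_image.mp hyBf
      have hab : a = b := (hfspec b hb).2.2 a haS (Or.inr hadj)
      obtain ⟨-, hbA⟩ := Finset.mem_sdiff.mp hb
      exact hbA (hab ▸ ha)
    rw [hX, Finset.mem_compl, hRset, Finset.mem_union]
    tauto
  have hdisjAX : ∀ a ∈ A, a ∉ X := by
    intro a ha haX
    rw [hX, Finset.mem_compl, hRset, Finset.mem_union] at haX
    exact haX (Or.inl ((Finset.mem_filter.mp ha).1))
  have hmain : A.card ≤ X.card + 1 := main_bound hconn hclaw A X hAX hdisjAX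
  have h1 : B.card + A.card = S.card :=
    Finset.card_sdiff_add_card_eq_card (Finset.filter_subset _ _)
  have h2 : Rset.card + X.card = Fintype.card V := by
    rw [hX]
    exact Finset.card_add_card_compl Rset
  omega

/-- If `G` is a connected claw-free finite simple graph of order `n ≥ 1`, then
`IR(G) ≤ (n+1)/2`, i.e. `2·IR(G) ≤ n + 1`. -/
theorem clawFree_irNum_le {V : Type*} [Fintype V] [DecidableEq V]
    (G : SimpleGraph V) (hconn : G.Connected) (hclaw : ClawFree G)
    (hn : 1 ≤ Fintype.card V) :
    2 * irNum G ≤ Fintype.card V + 1 := by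
  have hsup : irNum G ≤ (Fintype.card V + 1) / 2 := by
    apply csSup_le
    · exact ⟨0, ∅, fun v hv => absurd hv (Finset.notMem_empty v), Finset.card_empty⟩
    · rintro k ⟨S, hSirr, rfl⟩
      have := irred_bound hconn hclaw S hSirr
      omega
  omega

end EnclavelessGame
end

section
/- If G is a connected claw-free finite simple graph of order n with minimum degree at least 2, then the upper irredundance number satisfies IR(G) ≤ n/2, i.e., 2·IR(G) ≤ n. -/
namespace EnclavelessGame

variable {V : Type*} [Fintype V] [DecidableEq V]

lemma irred_two_mul_card_le (G : SimpleGraph V) [DecidableRel G.Adj]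
    (hclaw : ClawFree G) (hdeg : 2 ≤ G.minDegree)
    (S : Finset V) (hS : IsIrredundant G S) : 2 * S.card ≤ Fintype.card V := by
  classical
  -- choose private neighbors
  have hS' : ∀ v : V, ∃ w, v ∈ S →
      ((w = v ∨ G.Adj w v) ∧ ∀ u ∈ S, (u = w ∨ G.Adj u w) → u = v) := by
    intro v
    by_cases h : v ∈ S
    · obtain ⟨w, hw⟩ := hS v h
      exact ⟨w, fun _ => hw⟩
    · exact ⟨v, fun h' => absurd h' h⟩
  choose p hp using hS'
  set A : Finset V := S.filter (fun v => ∀ u ∈ S, ¬ G.Adj u v) with hA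
  set B : Finset V := S \ A with hB
  have hBS : B ⊆ S := Finset.sdiff_subset
  have hAS : A ⊆ S := Finset.filter_subset _ _
  -- p b ∉ S for b ∈ B
  have hpB : ∀ b ∈ B, p b ∉ S := by
    intro b hb hpS
    have hbS := hBS hb
    obtain ⟨hp1, hp2⟩ := hp b hbS
    have : p b = b := hp2 (p b) hpS (Or.inl rfl)
    -- b has a neighbor in S
    have hbB : ¬ (∀ u ∈ S, ¬ G.Adj u b) := by
      intro hall
      exact (Finset.mem_sdiff.mp hb).2 (Finset.mem_filter.mpr ⟨hbS, hall⟩)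
    push_neg at hbB
    obtain ⟨u, huS, hadj⟩ := hbB
    have : u = b := hp2 u huS (by rw [this]; exact Or.inr hadj)
    subst this
    exact G.loopless.irrefl u hadj
  -- p injective on B
  have hpinj : Set.InjOn p B := by
    intro b hb b' hb' heq
    obtain ⟨hp1, hp2⟩ := hp b (hBS hb)
    obtain ⟨hp1', hp2'⟩ := hp b' (hBS hb')
    refine (hp2 b' (hBS hb') ?_).symm
    rcases hp1' with h | h
    · exact Or.inl (by rw [← heq] at h; exact h.symm)
    · exact Or.inr (by rw [← heq] at h; exact h.symm)
  set PB : Finset V := B.image p with hPB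
  have hPBcard : PB.card = B.card := Finset.card_image_of_injOn hpinj
  have hPBdisj : Disjoint S PB := by
    rw [Finset.disjoint_right]
    intro x hx
    obtain ⟨b, hb, rfl⟩ := Finset.mem_image.mp hx
    exact hpB b hb
  set X : Finset V := Finset.univ \ (S ∪ PB) with hX
  -- neighbors of a ∈ A lie in X
  have hnbr : ∀ a ∈ A, G.neighborFinset a ⊆ X := by
    intro a ha w hw
    rw [SimpleGraph.mem_neighborFinset] at hw
    have haS := hAS ha
    have haiso : ∀ u ∈ S, ¬ G.Adj u a := (Finset.mem_filter.mp ha).2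
    simp only [hX, Finset.mem_sdiff, Finset.mem_univ, Finset.mem_union, true_and]
    push_neg
    constructor
    · intro hwS; exact haiso w hwS hw.symm
    · intro hwPB
      obtain ⟨b, hb, hbw⟩ := Finset.mem_image.mp hwPB
      obtain ⟨_, hp2⟩ := hp b (hBS hb)
      have hab : a = b := hp2 a haS (Or.inr (hbw ▸ hw))
      subst hab
      exact (Finset.mem_sdiff.mp hb).2 ha
  -- claw-freeness: each x adjacent to at most 2 vertices of A
  have hdeg2 : ∀ x : V, (A.filter (fun a => G.Adj x a)).card ≤ 2 := by
    intro x
    by_contra hcon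
    push_neg at hcon
    obtain ⟨T, hTsub, hT3⟩ := Finset.exists_subset_card_eq (by omega : 3 ≤ (A.filter (fun a => G.Adj x a)).card)
    apply hclaw
    refine ⟨x, T, hT3, ?_, ?_⟩
    · intro u hu; exact (Finset.mem_filter.mp (hTsub hu)).2
    · intro a ha b hb hab hadj
      have haA := (Finset.mem_filter.mp (hTsub ha)).1
      have hbA := (Finset.mem_filter.mp (hTsub hb)).1
      exact (Finset.mem_filter.mp hbA).2 a (hAS haA) hadj
  -- double counting
  have hfilterA : ∀ a ∈ A, (X.filter (fun x => G.Adj a x)) = G.neighborFinset a := by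
    intro a ha
    ext w
    simp only [Finset.mem_filter, SimpleGraph.mem_neighborFinset]
    exact ⟨fun h => h.2, fun h => ⟨hnbr a ha (SimpleGraph.mem_neighborFinset G a w |>.mpr h), h⟩⟩
  have hlow : 2 * A.card ≤ ∑ a ∈ A, (X.filter (fun x => G.Adj a x)).card := by
    rw [mul_comm]
    have := Finset.card_nsmul_le_sum A (fun a => (X.filter (fun x => G.Adj a x)).card) 2 ?_
    · simpa using this
    · intro a ha
      show 2 ≤ (X.filter (fun x => G.Adj a x)).card
      rw [hfilterA a ha]
      calc 2 ≤ G.minDegree := hdeg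
        _ ≤ G.degree a := G.minDegree_le_degree a
        _ = (G.neighborFinset a).card := rfl
  have hswap : (∑ a ∈ A, (X.filter (fun x => G.Adj a x)).card)
      = ∑ x ∈ X, (A.filter (fun a => G.Adj x a)).card := by
    simp only [Finset.card_filter]
    rw [Finset.sum_comm]
    refine Finset.sum_congr rfl fun x _ => Finset.sum_congr rfl fun a _ => ?_
    by_cases h : G.Adj a x
    · rw [if_pos h, if_pos h.symm]
    · rw [if_neg h, if_neg (fun h' => h h'.symm)]
  have hhigh : (∑ x ∈ X, (A.filter (fun a => G.Adj x a)).card) ≤ 2 * X.card := by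
    rw [mul_comm]
    have := Finset.sum_le_card_nsmul X (fun x => (A.filter (fun a => G.Adj x a)).card) 2
      (fun x _ => hdeg2 x)
    simpa using this
  have hAX : A.card ≤ X.card := by omega
  -- cardinality bookkeeping
  have hcardX : X.card + (S ∪ PB).card = Fintype.card V := by
    rw [hX]
    rw [Finset.card_sdiff_add_card_eq_card (Finset.subset_univ _)]
    exact Finset.card_univ
  have hcardU : (S ∪ PB).card = S.card + PB.card := Finset.card_union_of_disjoint hPBdisj
  have hcardS : A.card + B.card = S.card := by
    have := Finset.card_sdiff_add_card_eq_card hAS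
    rw [hB]
    omega
  omega

/-- If `G` is a connected claw-free finite simple graph of order `n` with minimum degree
at least `2`, then `IR(G) ≤ n/2`, i.e. `2·IR(G) ≤ n`. -/
theorem clawFree_minDegreeTwo_irNum_le {V : Type*} [Fintype V] [DecidableEq V]
    (G : SimpleGraph V) [DecidableRel G.Adj]
    (hconn : G.Connected) (hclaw : ClawFree G) (hdeg : 2 ≤ G.minDegree) :
    2 * irNum G ≤ Fintype.card V := by
  classical
  have hmain : irNum G ≤ Fintype.card V / 2 := by
    apply csSup_le
    · exact ⟨0, ∅, fun v h => absurd h (Finset.notMem_empty v), rfl⟩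
    · rintro k ⟨S, hSirr, rfl⟩
      have := irred_two_mul_card_le G hclaw hdeg S hSirr
      omega
  omega

end EnclavelessGame
end

section
/- If G is a connected claw-free finite simple graph of order n with minimum degree at least 2, then Ψ⁺_g(G) ≥ n/2 and Ψ⁻_g(G) ≥ n/2; equivalently, 2·Ψ⁺_g(G) ≥ n and 2·Ψ⁻_g(G) ≥ n. -/
namespace EnclavelessGame

variable {V : Type*} [Fintype V] [DecidableEq V]

lemma maximalEnclaveless_card {G : SimpleGraph V} [DecidableRel G.Adj]
    (hclaw : ClawFree G) (hdeg : 2 ≤ G.minDegree) {S : Finset V}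
    (hS : IsMaximalEnclaveless G S) : Fintype.card V ≤ 2 * S.card := by
  classical
  obtain ⟨hencl, hmax⟩ := hS
  set extPriv : V → Prop :=
    fun v => ∃ w, w ∈ S ∧ G.Adj v w ∧ ∀ u, u ∉ S → G.Adj u w → u = v with hEP
  -- dichotomy for vertices outside S
  have key : ∀ v, v ∉ S → extPriv v ∨ (∀ u, G.Adj v u → u ∈ S) := by
    intro v hv
    have hne : insert v S ≠ S := fun h => hv (h ▸ Finset.mem_insert_self v S)
    have hnotencl : ¬ IsEnclaveless G (insert v S) :=
      fun h => hne (hmax _ (Finset.subset_insert _ _) h)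
    rw [IsEnclaveless] at hnotencl
    push_neg at hnotencl
    obtain ⟨w, hw1, hw2⟩ := hnotencl
    rcases Finset.mem_insert.mp hw1 with hwv | hwS
    · subst hwv
      right
      intro u hu
      rcases Finset.mem_insert.mp (hw2 u hu) with h | h
      · exact absurd hu (h ▸ G.irrefl)
      · exact h
    · left
      have hvw : G.Adj v w := by
        by_contra hadj
        refine hencl w ⟨hwS, fun u hu => ?_⟩
        rcases Finset.mem_insert.mp (hw2 u hu) with h | h
        · exact absurd (h ▸ hu) fun hh => hadj hh.symm
        · exact h
      exact ⟨w, hwS, hvw, fun u hu hadj => by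
        rcases Finset.mem_insert.mp (hw2 u hadj.symm) with h | h
        · exact h
        · exact absurd h hu⟩
  set A := Sᶜ.filter extPriv with hA
  set B := Sᶜ.filter (fun v => ¬ extPriv v) with hB
  have hBprop : ∀ v ∈ B, ∀ u, G.Adj v u → u ∈ S := by
    intro v hv
    rw [hB, Finset.mem_filter, Finset.mem_compl] at hv
    rcases key v hv.1 with h | h
    · exact absurd h hv.2
    · exact h
  -- choice function for private neighbors
  set f : V → V := fun v => if h : extPriv v then h.choose else v with hf
  have hfspec : ∀ v, extPriv v →
      f v ∈ S ∧ G.Adj v (f v) ∧ ∀ u, u ∉ S → G.Adj u (f v) → u = v := by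
    intro v h
    have := h.choose_spec
    simp only [hf, dif_pos h]
    exact this
  set P := A.image f with hP
  have hPcard : P.card = A.card := by
    rw [hP]
    apply Finset.card_image_of_injOn
    intro v1 h1 v2 h2 heq
    simp only [Finset.mem_coe, hA, Finset.mem_filter] at h1 h2
    obtain ⟨_, _, huniq⟩ := hfspec v1 h1.2
    obtain ⟨_, hadj2, _⟩ := hfspec v2 h2.2
    exact (huniq v2 (Finset.mem_compl.mp h2.1) (heq ▸ hadj2)).symm
  have hPS : P ⊆ S := by
    intro w hw
    rw [hP] at hw
    obtain ⟨v, hv, rfl⟩ := Finset.mem_image.mp hw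
    exact (hfspec v (Finset.mem_filter.mp hv).2).1
  set NB := S.filter (fun w => ∃ v ∈ B, G.Adj v w) with hNB
  have hNBS : NB ⊆ S := Finset.filter_subset _ _
  -- each w has at most 2 neighbors in B
  have htwo : ∀ w, (B.filter (fun v => G.Adj v w)).card ≤ 2 := by
    intro w
    by_contra hgt
    push_neg at hgt
    obtain ⟨T, hTsub, hT3⟩ := Finset.exists_subset_card_eq hgt
    refine hclaw ⟨w, T, hT3, fun u hu => ?_, fun a ha b hb hab => ?_⟩
    · exact ((Finset.mem_filter.mp (hTsub hu)).2).symm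
    · intro hadj
      have haB := (Finset.mem_filter.mp (hTsub ha)).1
      have hbB := (Finset.mem_filter.mp (hTsub hb)).1
      have := hBprop a haB b hadj
      exact Finset.mem_compl.mp (Finset.mem_filter.mp hbB).1 this
  -- counting
  have hBcount : B.card ≤ NB.card := by
    have h1 : 2 * B.card ≤ ∑ v ∈ B, (S.filter (fun w => G.Adj v w)).card := by
      rw [Nat.mul_comm, ← Finset.sum_const_nat (m := 2) (fun x hx => rfl)]
      apply Finset.sum_le_sum
      intro v hv
      have hd : G.neighborFinset v ⊆ S.filter (fun w => G.Adj v w) := by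
        intro u hu
        rw [SimpleGraph.mem_neighborFinset] at hu
        exact Finset.mem_filter.mpr ⟨hBprop v hv u hu, hu⟩
      calc 2 ≤ G.minDegree := hdeg
        _ ≤ G.degree v := G.minDegree_le_degree v
        _ ≤ _ := Finset.card_le_card hd
    have h2 : ∑ v ∈ B, (S.filter (fun w => G.Adj v w)).card
        = ∑ w ∈ S, (B.filter (fun v => G.Adj v w)).card := by
      simp only [Finset.card_filter]
      exact Finset.sum_comm
    have h3 : ∑ w ∈ S, (B.filter (fun v => G.Adj v w)).card
        = ∑ w ∈ NB, (B.filter (fun v => G.Adj v w)).card := by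
      symm
      apply Finset.sum_subset hNBS
      intro w hwS hwNB
      rw [Finset.card_eq_zero, Finset.filter_eq_empty_iff]
      intro v hv hadj
      exact hwNB (Finset.mem_filter.mpr ⟨hwS, v, hv, hadj⟩)
    have h4 : ∑ w ∈ NB, (B.filter (fun v => G.Adj v w)).card ≤ 2 * NB.card := by
      rw [Nat.mul_comm, ← Finset.sum_const_nat (m := 2) (fun x hx => rfl)]
      exact Finset.sum_le_sum fun w _ => htwo w
    omega
  have hdisj : Disjoint P NB := by
    rw [Finset.disjoint_left]
    intro w hwP hwNB
    obtain ⟨v, hvA, rfl⟩ := Finset.mem_image.mp hwP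
    rw [hA, Finset.mem_filter] at hvA
    obtain ⟨_, _, huniq⟩ := hfspec v hvA.2
    obtain ⟨_, b, hbB, hbadj⟩ := Finset.mem_filter.mp hwNB
    have hbS : b ∉ S := Finset.mem_compl.mp (Finset.mem_filter.mp hbB).1
    have := huniq b hbS hbadj
    exact (Finset.mem_filter.mp hbB).2 (this ▸ hvA.2)
  have hsplit : A.card + B.card = Sᶜ.card := Finset.card_filter_add_card_filter_not _
  have hfin : Sᶜ.card ≤ S.card := by
    calc Sᶜ.card = A.card + B.card := hsplit.symm
      _ ≤ P.card + NB.card := by omega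
      _ = (P ∪ NB).card := (Finset.card_union_of_disjoint hdisj).symm
      _ ≤ S.card := Finset.card_le_card (Finset.union_subset hPS hNBS)
  have := Finset.card_add_card_compl S
  omega

lemma enclaveless_of_subset {G : SimpleGraph V} {S T : Finset V}
    (hT : IsEnclaveless G T) (hsub : S ⊆ T) : IsEnclaveless G S := by
  rintro v ⟨hvS, hN⟩
  exact hT v ⟨hsub hvS, fun u hu => hsub (hN u hu)⟩

lemma game_ge (G : SimpleGraph V) [DecidableRel G.Adj]
    (hclaw : ClawFree G) (hdeg : 2 ≤ G.minDegree)
    (b : Bool) (S : Finset V) (hS : IsEnclaveless G S) :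
    Fintype.card V ≤ 2 * gameVal G b S := by
  rw [gameVal]
  by_cases h : (playableSet G S).Nonempty
  · rw [dif_pos h]
    cases b with
    | true =>
      simp only [if_true]
      obtain ⟨v, hv⟩ := h
      have hv' : v ∉ S ∧ IsEnclaveless G (insert v S) := by
        simpa [playableSet] using hv
      have hlt : (insert v S)ᶜ.card < Sᶜ.card := by
        rw [Finset.compl_insert]
        exact Finset.card_erase_lt_of_mem (Finset.mem_compl.mpr hv'.1)
      have hrec := game_ge G hclaw hdeg false (insert v S) hv'.2
      refine le_trans hrec (Nat.mul_le_mul_left 2 ?_)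
      exact Finset.le_sup' (fun v => gameVal G false (insert v.1 S))
        (Finset.mem_attach _ ⟨v, hv⟩)
    | false =>
      simp only [Bool.false_eq_true, if_false]
      have hatt : (playableSet G S).attach.Nonempty := by simpa using h
      obtain ⟨w, hwmem, hweq⟩ := Finset.exists_mem_eq_inf' hatt
        (fun v : {x // x ∈ playableSet G S} => gameVal G true (insert v.1 S))
      rw [hweq]
      have hw' : w.1 ∉ S ∧ IsEnclaveless G (insert w.1 S) := by
        have h2 := w.2
        simp only [playableSet, Finset.mem_filter, Finset.mem_univ, true_and] at h2
        exact h2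
      have hlt : (insert w.1 S)ᶜ.card < Sᶜ.card := by
        rw [Finset.compl_insert]
        exact Finset.card_erase_lt_of_mem (Finset.mem_compl.mpr hw'.1)
      exact game_ge G hclaw hdeg true (insert w.1 S) hw'.2
  · rw [dif_neg h]
    apply maximalEnclaveless_card hclaw hdeg
    refine ⟨hS, fun T hsub hT => ?_⟩
    by_contra hne
    have hex : ∃ v ∈ T, v ∉ S := by
      by_contra hc
      push_neg at hc
      exact hne (Finset.Subset.antisymm hc hsub)
    obtain ⟨v, hvT, hvS⟩ := hex
    refine h ⟨v, ?_⟩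
    simp only [playableSet, Finset.mem_filter, Finset.mem_univ, true_and]
    exact ⟨hvS, enclaveless_of_subset hT (Finset.insert_subset hvT hsub)⟩
termination_by Sᶜ.card
decreasing_by
  all_goals assumption

/-- If `G` is a connected claw-free finite simple graph of order `n` with minimum degree
at least `2`, then `Ψ⁺_g(G) ≥ n/2` and `Ψ⁻_g(G) ≥ n/2`, i.e. `2·Ψ⁺_g(G) ≥ n` and
`2·Ψ⁻_g(G) ≥ n`. -/
theorem clawFree_minDegreeTwo_gameNums_ge {V : Type*} [Fintype V] [DecidableEq V]
    (G : SimpleGraph V) [DecidableRel G.Adj]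
    (hconn : G.Connected) (hclaw : ClawFree G) (hdeg : 2 ≤ G.minDegree) :
    Fintype.card V ≤ 2 * maxStartGameNum G ∧ Fintype.card V ≤ 2 * minStartGameNum G := by
  have hempty : IsEnclaveless G (∅ : Finset V) := by
    rintro v ⟨hv, -⟩
    exact Finset.notMem_empty v hv
  exact ⟨game_ge G hclaw hdeg true ∅ hempty, game_ge G hclaw hdeg false ∅ hempty⟩

end EnclavelessGame
end

section
/- If G is a connected claw-free finite simple graph of order n ≥ 2, then Ψ⁺_g(G) ≥ n/2, i.e., 2·Ψ⁺_g(G) ≥ n. -/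
namespace EnclavelessGame

variable {V : Type*} [Fintype V] [DecidableEq V]

/-! ### Auxiliary machinery -/

section Aux

variable (G : SimpleGraph V) [DecidableRel G.Adj]

/-- A matching represented as a finset of 2-element edge finsets. -/
def IsMatchingF (M : Finset (Finset V)) : Prop :=
  (∀ e ∈ M, ∃ a b : V, G.Adj a b ∧ e = {a, b}) ∧
    ∀ e ∈ M, ∀ f ∈ M, e ≠ f → Disjoint e f

/-- A vertex is covered by the matching `M`. -/
def coveredF (M : Finset (Finset V)) (v : V) : Prop := ∃ e ∈ M, v ∈ e

lemma isEnclaveless_empty : IsEnclaveless G ∅ := by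
  intro v hv
  exact absurd hv.1 (Finset.notMem_empty v)

lemma card_eq_two_of_mem {M : Finset (Finset V)} (hM : IsMatchingF G M) {e : Finset V}
    (he : e ∈ M) : e.card = 2 := by
  obtain ⟨a, b, hab, rfl⟩ := hM.1 e he
  rw [Finset.card_insert_of_notMem (by simp [hab.ne]), Finset.card_singleton]

lemma card_cover {M : Finset (Finset V)} (hM : IsMatchingF G M) :
    (M.biUnion (fun e => e)).card = 2 * M.card := by
  rw [Finset.card_biUnion (fun e he f hf hef => hM.2 e he f hf hef)]
  rw [Finset.sum_congr rfl (fun e he => card_eq_two_of_mem G hM he)]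
  simp [Nat.mul_comm]

/-- The key static bound: if `S` is a maximal enclaveless set, `M` is a matching
covering exactly the complement of `U`, with `U ⊆ S` of size at most 1, then
`|M| ≤ |S \ U|`. -/
lemma static_bound (S U : Finset V) (M : Finset (Finset V)) (hM : IsMatchingF G M)
    (hcov : ∀ v, v ∉ U → coveredF M v) (huncov : ∀ u ∈ U, ¬ coveredF M u)
    (hU : U.card ≤ 1) (hUS : U ⊆ S) (hS : IsEnclaveless G S)
    (hmax : ∀ v, v ∉ S → ¬ IsEnclaveless G (insert v S)) :
    M.card ≤ (S \ U).card := by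
  classical
  set nb : V → Finset V := fun w => insert w (G.neighborFinset w) with hnb
  set Wit : V → Finset V := fun a => S.filter (fun w => nb w \ S = {a}) with hWitdef
  have W1 : ∀ a b : V, a ∉ S → G.Adj a b → b ∉ S → (Wit a).Nonempty := by
    intro a b ha hab hb
    have h1 := hmax a ha
    simp only [IsEnclaveless, IsEnclave, not_forall, not_not] at h1
    obtain ⟨v, hv⟩ := h1
    rcases Finset.mem_insert.mp hv.1 with rfl | hvS
    · exfalso
      have := hv.2 b hab
      rcases Finset.mem_insert.mp this with rfl | h
      · exact G.irrefl hab
      · exact hb h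
    · have hvnotall : ∃ u, G.Adj v u ∧ u ∉ S := by
        by_contra hc
        push_neg at hc
        exact hS v ⟨hvS, hc⟩
      obtain ⟨u, hvu, huS⟩ := hvnotall
      have hua : u = a := by
        have := hv.2 u hvu
        rcases Finset.mem_insert.mp this with rfl | h
        · rfl
        · exact absurd h huS
      subst hua
      refine ⟨v, Finset.mem_filter.mpr ⟨hvS, ?_⟩⟩
      ext x
      simp only [hnb, Finset.mem_sdiff, Finset.mem_insert,
        SimpleGraph.mem_neighborFinset, Finset.mem_singleton]
      constructor
      · rintro ⟨hx1 | hx2, hxS⟩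
        · subst hx1; exact absurd hvS hxS
        · have := hv.2 x hx2
          rcases Finset.mem_insert.mp this with rfl | h
          · rfl
          · exact absurd h hxS
      · rintro rfl
        exact ⟨Or.inr hvu, ha⟩
  have witS : ∀ y a, y ∈ Wit a → y ∈ S := fun y a hy => (Finset.mem_filter.mp hy).1
  have witdet : ∀ y a a', y ∈ Wit a → y ∈ Wit a' → a = a' := by
    intro y a a' h1 h2
    have e1 := (Finset.mem_filter.mp h1).2
    have e2 := (Finset.mem_filter.mp h2).2
    have : ({a} : Finset V) = {a'} := by rw [← e1, ← e2]
    simpa using this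
  have witadj : ∀ y a z, y ∈ Wit a → G.Adj y z → z ∉ S → z = a := by
    intro y a z hy hyz hz
    have e1 := (Finset.mem_filter.mp hy).2
    have : z ∈ nb y \ S := by
      simp only [hnb, Finset.mem_sdiff, Finset.mem_insert,
        SimpleGraph.mem_neighborFinset]
      exact ⟨Or.inr hyz, hz⟩
    rw [e1] at this
    exact Finset.mem_singleton.mp this
  set t : {e // e ∈ M} → Finset V := fun e =>
    if (e.1 ∩ S).Nonempty then e.1 ∩ S else (e.1.biUnion Wit) \ U with htdef
  have shape : ∀ e : {e // e ∈ M}, ∃ a b : V, G.Adj a b ∧ e.1 = {a, b} :=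
    fun e => hM.1 e.1 e.2
  have edisj : ∀ (e f : {e // e ∈ M}) (x : V), x ∈ e.1 → x ∈ f.1 → e = f := by
    intro e f x hx hfx
    by_contra hne
    have h1 : e.1 ≠ f.1 := fun h => hne (Subtype.ext h)
    exact Finset.disjoint_left.mp (hM.2 e.1 e.2 f.1 f.2 h1) hx hfx
  have tsub : ∀ e, t e ⊆ S \ U := by
    intro e x hx
    simp only [htdef] at hx
    split_ifs at hx with h
    · rcases Finset.mem_inter.mp hx with ⟨hxe, hxS⟩
      refine Finset.mem_sdiff.mpr ⟨hxS, fun hxU => ?_⟩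
      exact huncov x hxU ⟨e.1, e.2, hxe⟩
    · rcases Finset.mem_sdiff.mp hx with ⟨hx1, hxU⟩
      obtain ⟨a, _, hxa⟩ := Finset.mem_biUnion.mp hx1
      exact Finset.mem_sdiff.mpr ⟨witS x a hxa, hxU⟩
  -- the P/Q dichotomy for membership in t e
  have tPQ : ∀ (y : V) (e : {e // e ∈ M}), y ∈ t e →
      y ∈ e.1 ∨ ((e.1 ∩ S) = ∅ ∧ ∃ a ∈ e.1, y ∈ Wit a) := by
    intro y e hy
    simp only [htdef] at hy
    split_ifs at hy with h
    · exact Or.inl (Finset.mem_inter.mp hy).1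
    · rcases Finset.mem_sdiff.mp hy with ⟨hy1, _⟩
      obtain ⟨a, ha, hya⟩ := Finset.mem_biUnion.mp hy1
      exact Or.inr ⟨Finset.not_nonempty_iff_eq_empty.mp h, a, ha, hya⟩
  have QQ : ∀ (y : V) (e f : {e // e ∈ M}),
      (∃ a ∈ e.1, y ∈ Wit a) → (∃ a ∈ f.1, y ∈ Wit a) → e = f := by
    rintro y e f ⟨a, ha, hya⟩ ⟨a', ha', hya'⟩
    have : a = a' := witdet y a a' hya hya'
    subst this
    exact edisj e f a ha ha'
  have hall : ∀ s : Finset {e // e ∈ M}, s.card ≤ (s.biUnion t).card := by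
    intro s
    set smix := s.filter (fun e => (e.1 ∩ S).Nonempty ∧ ¬ e.1 ⊆ S) with hsmix
    set srest := s.filter (fun e => ¬ ((e.1 ∩ S).Nonempty ∧ ¬ e.1 ⊆ S)) with hsrest
    have tmix : ∀ e ∈ smix, t e = e.1 ∩ S := by
      intro e he
      have h := (Finset.mem_filter.mp he).2.1
      simp only [htdef]
      rw [if_pos h]
    have hmixdisj : ∀ e ∈ smix, ∀ f ∈ smix, e ≠ f → Disjoint (t e) (t f) := by
      intro e he f hf hef
      rw [tmix e he, tmix f hf]
      have h1 : e.1 ≠ f.1 := fun h => hef (Subtype.ext h)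
      exact Finset.disjoint_of_subset_left Finset.inter_subset_left
        (Finset.disjoint_of_subset_right Finset.inter_subset_left
          (hM.2 e.1 e.2 f.1 f.2 h1))
    have hmixcard : smix.card ≤ (smix.biUnion t).card := by
      rw [Finset.card_biUnion hmixdisj]
      calc smix.card = ∑ _e ∈ smix, 1 := by simp
        _ ≤ ∑ e ∈ smix, (t e).card := Finset.sum_le_sum (fun e he =>
            Finset.card_pos.mpr (by rw [tmix e he]; exact (Finset.mem_filter.mp he).2.1))
    have trest : ∀ e ∈ srest, (e.1 ⊆ S ∧ t e = e.1) ∨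
        ((e.1 ∩ S) = ∅ ∧ t e = (e.1.biUnion Wit) \ U) := by
      intro e he
      have h := (Finset.mem_filter.mp he).2
      by_cases hne : (e.1 ∩ S).Nonempty
      · left
        have hsub : e.1 ⊆ S := by
          by_contra hc
          exact h ⟨hne, hc⟩
        refine ⟨hsub, ?_⟩
        simp only [htdef]
        rw [if_pos hne, Finset.inter_eq_left.mpr hsub]
      · right
        refine ⟨Finset.not_nonempty_iff_eq_empty.mp hne, ?_⟩
        simp only [htdef]
        rw [if_neg hne]
    set bad : {e // e ∈ M} → Prop :=
      fun e => ¬(e.1 ∩ S).Nonempty ∧ (U ∩ e.1.biUnion Wit).Nonempty with hbaddef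
    have hbadcard : (srest.filter bad).card ≤ 1 := by
      rw [Finset.card_le_one]
      intro e he f hf
      obtain ⟨u, hu⟩ := (Finset.mem_filter.mp he).2.2
      obtain ⟨u', hu'⟩ := (Finset.mem_filter.mp hf).2.2
      rcases Finset.mem_inter.mp hu with ⟨huU, hue⟩
      rcases Finset.mem_inter.mp hu' with ⟨huU', hue'⟩
      have huu : u = u' := Finset.card_le_one.mp hU u huU u' huU'
      subst huu
      obtain ⟨a, ha, hwa⟩ := Finset.mem_biUnion.mp hue
      obtain ⟨a', ha', hwa'⟩ := Finset.mem_biUnion.mp hue'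
      exact QQ u e f ⟨a, ha, hwa⟩ ⟨a', ha', hwa'⟩
    have houtfacts : ∀ e : {e // e ∈ M}, e.1 ∩ S = ∅ → 2 ≤ (e.1.biUnion Wit).card := by
      intro e hemp
      obtain ⟨a, b, hab, habe⟩ := shape e
      have haS : a ∉ S := by
        intro h
        have : a ∈ e.1 ∩ S := Finset.mem_inter.mpr ⟨by rw [habe]; simp, h⟩
        rw [hemp] at this
        exact absurd this (Finset.notMem_empty a)
      have hbS : b ∉ S := by
        intro h
        have : b ∈ e.1 ∩ S := Finset.mem_inter.mpr ⟨by rw [habe]; simp, h⟩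
        rw [hemp] at this
        exact absurd this (Finset.notMem_empty b)
      have hWa := W1 a b haS hab hbS
      have hWb := W1 b a hbS hab.symm haS
      have hdisjW : Disjoint (Wit a) (Wit b) := by
        rw [Finset.disjoint_left]
        intro y hy hyb
        exact hab.ne (witdet y a b hy hyb)
      have hbu : e.1.biUnion Wit = Wit a ∪ Wit b := by
        rw [habe, Finset.biUnion_insert, Finset.singleton_biUnion]
      rw [hbu, Finset.card_union_of_disjoint hdisjW]
      have h1 := Finset.card_pos.mpr hWa
      have h2 := Finset.card_pos.mpr hWb
      omega
    have hper1 : ∀ e ∈ srest, 1 ≤ (t e).card := by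
      intro e he
      rcases trest e he with ⟨_, hte⟩ | ⟨hemp, hte⟩
      · rw [hte]
        have := card_eq_two_of_mem G hM e.2
        omega
      · rw [hte]
        have h2 := houtfacts e hemp
        have h3 := Finset.le_card_sdiff U (e.1.biUnion Wit)
        omega
    have hper2 : ∀ e ∈ srest, ¬ bad e → 2 ≤ (t e).card := by
      intro e he hnb
      rcases trest e he with ⟨_, hte⟩ | ⟨hemp, hte⟩
      · rw [hte]
        have := card_eq_two_of_mem G hM e.2
        omega
      · rw [hte]
        have h2 := houtfacts e hemp
        have hdisj : Disjoint (e.1.biUnion Wit) U := by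
          rw [Finset.disjoint_right, ]
          intro x hxU hxB
          refine hnb ⟨?_, ⟨x, Finset.mem_inter.mpr ⟨hxU, hxB⟩⟩⟩
          rw [hemp]
          exact Finset.not_nonempty_empty
        rw [Finset.sdiff_eq_self_iff_disjoint.mpr hdisj]
        exact h2
    have hsum : 2 * srest.card ≤ (∑ e ∈ srest, (t e).card) + 1 := by
      have hsplit : (∑ e ∈ srest.filter bad, (t e).card) +
          (∑ e ∈ srest.filter (fun e => ¬ bad e), (t e).card) = ∑ e ∈ srest, (t e).card :=
        Finset.sum_filter_add_sum_filter_not srest bad (fun e => (t e).card)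
      have hcsplit := Finset.card_filter_add_card_filter_not (s := srest) (p := bad)
      have hA : (srest.filter bad).card * 1 ≤ ∑ e ∈ srest.filter bad, (t e).card := by
        rw [Finset.card_eq_sum_ones (srest.filter bad), Finset.sum_mul]
        apply Finset.sum_le_sum
        intro e he
        simpa using hper1 e (Finset.mem_of_mem_filter e he)
      have hB : (srest.filter (fun e => ¬ bad e)).card * 2 ≤
          ∑ e ∈ srest.filter (fun e => ¬ bad e), (t e).card := by
        rw [Finset.card_eq_sum_ones, Finset.sum_mul]
        apply Finset.sum_le_sum
        intro e he
        have hmem := Finset.mem_filter.mp he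
        simpa using hper2 e hmem.1 hmem.2
      omega
    set Yr := srest.biUnion t with hYrdef
    set I := srest.biUnion (fun e => (t e).image (fun y => (e, y))) with hIdef
    have hIcard : I.card = ∑ e ∈ srest, (t e).card := by
      rw [hIdef, Finset.card_biUnion]
      · exact Finset.sum_congr rfl (fun e _ =>
          Finset.card_image_of_injective _ (fun x y h => by
            simpa using (Prod.mk.injEq _ _ _ _ ▸ h : (e, x) = (e, y))))
      · intro x _ y _ hxy
        rw [Function.onFun, Finset.disjoint_left]
        rintro p hp hq
        obtain ⟨w, _, rfl⟩ := Finset.mem_image.mp hp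
        obtain ⟨w', _, hw'⟩ := Finset.mem_image.mp hq
        exact hxy (by simpa using congrArg Prod.fst hw'.symm)
    have hfibers : I.card = ∑ y ∈ Yr, (I.filter (fun p => p.2 = y)).card := by
      apply Finset.card_eq_sum_card_fiberwise
      intro p hp
      obtain ⟨e, he, hpe⟩ := Finset.mem_biUnion.mp hp
      obtain ⟨w, hw, rfl⟩ := Finset.mem_image.mp hpe
      exact Finset.mem_biUnion.mpr ⟨e, he, hw⟩
    have hfib2 : ∀ y ∈ Yr, (I.filter (fun p => p.2 = y)).card ≤ 2 := by
      intro y _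
      by_contra hc
      push_neg at hc
      obtain ⟨p1, p2, p3, hp1, hp2, hp3, h12, h13, h23⟩ := Finset.two_lt_card_iff.mp hc
      have unpack : ∀ p : {e // e ∈ M} × V, p ∈ I.filter (fun p => p.2 = y) →
          p = (p.1, y) ∧ y ∈ t p.1 := by
        intro p hp
        have h1 := Finset.mem_filter.mp hp
        obtain ⟨e, _, hpe⟩ := Finset.mem_biUnion.mp h1.1
        obtain ⟨w, hw, rfl⟩ := Finset.mem_image.mp hpe
        have : w = y := h1.2
        subst this
        exact ⟨rfl, hw⟩
      obtain ⟨hp1e, ht1⟩ := unpack p1 hp1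
      obtain ⟨hp2e, ht2⟩ := unpack p2 hp2
      obtain ⟨hp3e, ht3⟩ := unpack p3 hp3
      have hne12 : p1.1 ≠ p2.1 := fun h => h12 (by rw [hp1e, hp2e, h])
      have hne13 : p1.1 ≠ p3.1 := fun h => h13 (by rw [hp1e, hp3e, h])
      have hne23 : p2.1 ≠ p3.1 := fun h => h23 (by rw [hp2e, hp3e, h])
      rcases tPQ y p1.1 ht1 with hP1 | hQ1 <;>
        rcases tPQ y p2.1 ht2 with hP2 | hQ2 <;>
          rcases tPQ y p3.1 ht3 with hP3 | hQ3
      · exact hne12 (edisj _ _ y hP1 hP2)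
      · exact hne12 (edisj _ _ y hP1 hP2)
      · exact hne13 (edisj _ _ y hP1 hP3)
      · exact hne23 (QQ y _ _ hQ2.2 hQ3.2)
      · exact hne23 (edisj _ _ y hP2 hP3)
      · exact hne13 (QQ y _ _ hQ1.2 hQ3.2)
      · exact hne12 (QQ y _ _ hQ1.2 hQ2.2)
      · exact hne12 (QQ y _ _ hQ1.2 hQ2.2)
    have hrest : srest.card ≤ Yr.card := by
      have hI2 : ∑ y ∈ Yr, (I.filter (fun p => p.2 = y)).card ≤ 2 * Yr.card := by
        calc ∑ y ∈ Yr, (I.filter (fun p => p.2 = y)).card ≤ ∑ _y ∈ Yr, 2 :=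
              Finset.sum_le_sum hfib2
          _ = 2 * Yr.card := by
              rw [Finset.sum_const, smul_eq_mul, mul_comm]
      omega
    have hdisjY : Disjoint (smix.biUnion t) Yr := by
      rw [Finset.disjoint_left]
      intro y hy1 hy2
      obtain ⟨e0, he0, hy0⟩ := Finset.mem_biUnion.mp hy1
      obtain ⟨e1, he1, hy1'⟩ := Finset.mem_biUnion.mp hy2
      have hm0 := (Finset.mem_filter.mp he0).2
      have hye0 : y ∈ e0.1 ∩ S := by rw [← tmix e0 he0]; exact hy0
      have hne01 : e0 ≠ e1 := by
        intro h
        subst h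
        exact (Finset.mem_filter.mp he1).2 hm0
      rcases tPQ y e1 hy1' with hP | ⟨hemp, a, ha, hya⟩
      · exact hne01 (edisj e0 e1 y (Finset.mem_inter.mp hye0).1 hP)
      · obtain ⟨c, d, hcd, hcde⟩ := shape e0
        obtain ⟨w, hwe0, hwS⟩ : ∃ w ∈ e0.1, w ∉ S := by
          by_contra hcon
          push_neg at hcon
          exact hm0.2 hcon
        have hyS : y ∈ S := (Finset.mem_inter.mp hye0).2
        have hye0' : y ∈ e0.1 := (Finset.mem_inter.mp hye0).1
        have hywne : y ≠ w := fun h => hwS (h ▸ hyS)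
        have hadj : G.Adj y w := by
          have hy' := hye0'
          have hw' := hwe0
          rw [hcde, Finset.mem_insert, Finset.mem_singleton] at hy' hw'
          rcases hy' with rfl | rfl <;> rcases hw' with rfl | rfl
          · exact absurd rfl hywne
          · exact hcd
          · exact hcd.symm
          · exact absurd rfl hywne
        have hwa : w = a := witadj y a w hya hadj hwS
        subst hwa
        exact hne01 (edisj e0 e1 w hwe0 ha)
    have hunion : (smix.biUnion t) ∪ Yr ⊆ s.biUnion t := by
      intro y hy
      rcases Finset.mem_union.mp hy with h | h <;>
      · obtain ⟨e, he, hye⟩ := Finset.mem_biUnion.mp h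
        exact Finset.mem_biUnion.mpr ⟨e, (Finset.mem_filter.mp he).1, hye⟩
    calc s.card = smix.card + srest.card := by
          rw [hsmix, hsrest, Finset.card_filter_add_card_filter_not]
      _ ≤ (smix.biUnion t).card + Yr.card := Nat.add_le_add hmixcard hrest
      _ = ((smix.biUnion t) ∪ Yr).card := (Finset.card_union_of_disjoint hdisjY).symm
      _ ≤ (s.biUnion t).card := Finset.card_le_card hunion
  obtain ⟨f, hfinj, hft⟩ := (Finset.all_card_le_biUnion_card_iff_exists_injective t).mp hall
  have h1 : (Finset.univ : Finset {e // e ∈ M}).card ≤ (S \ U).card :=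
    Finset.card_le_card_of_injOn f (fun e _ => tsub e (hft e)) (Function.Injective.injOn hfinj)
  simpa [Finset.card_univ, Fintype.card_coe] using h1

lemma coveredF_insert (pr : Finset V) (M : Finset (Finset V)) (z : V) :
    coveredF (insert pr M) z ↔ z ∈ pr ∨ coveredF M z := by
  constructor
  · rintro ⟨f, hf, hzf⟩
    rcases Finset.mem_insert.mp hf with rfl | hf
    · exact Or.inl hzf
    · exact Or.inr ⟨f, hf, hzf⟩
  · rintro (hz | ⟨f, hf, hzf⟩)
    · exact ⟨pr, Finset.mem_insert_self _ _, hz⟩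
    · exact ⟨f, Finset.mem_insert_of_mem hf, hzf⟩

lemma coveredF_erase {M : Finset (Finset V)} (hM : IsMatchingF G M) {e : Finset V}
    (he : e ∈ M) (z : V) : coveredF (M.erase e) z ↔ coveredF M z ∧ z ∉ e := by
  constructor
  · rintro ⟨f, hf, hzf⟩
    have hfM := Finset.mem_of_mem_erase hf
    have hfe := Finset.ne_of_mem_erase hf
    refine ⟨⟨f, hfM, hzf⟩, fun hze => ?_⟩
    exact Finset.disjoint_left.mp (hM.2 f hfM e he hfe) hzf hze
  · rintro ⟨⟨f, hf, hzf⟩, hze⟩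
    refine ⟨f, Finset.mem_erase.mpr ⟨?_, hf⟩, hzf⟩
    rintro rfl
    exact hze hzf

lemma matching_insert {M : Finset (Finset V)} (hM : IsMatchingF G M) {a b : V}
    (hab : G.Adj a b) (ha : ¬ coveredF M a) (hb : ¬ coveredF M b) :
    IsMatchingF G (insert {a, b} M) ∧ (insert {a, b} M).card = M.card + 1 := by
  have hd : ∀ g ∈ M, Disjoint ({a, b} : Finset V) g := by
    intro g hg
    rw [Finset.disjoint_left]
    intro z hz
    rcases Finset.mem_insert.mp hz with rfl | hz
    · exact fun hzg => ha ⟨g, hg, hzg⟩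
    · rw [Finset.mem_singleton] at hz
      subst hz
      exact fun hzg => hb ⟨g, hg, hzg⟩
  have hnm : ({a, b} : Finset V) ∉ M := fun hmem => ha ⟨{a, b}, hmem, by simp⟩
  refine ⟨⟨?_, ?_⟩, ?_⟩
  · intro f hf
    rcases Finset.mem_insert.mp hf with rfl | hf
    · exact ⟨a, b, hab, rfl⟩
    · exact hM.1 f hf
  · intro f hf g hg hfg
    rcases Finset.mem_insert.mp hf with rfl | hf <;>
      rcases Finset.mem_insert.mp hg with rfl | hg
    · exact absurd rfl hfg
    · exact hd g hg
    · exact (hd f hf).symm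
    · exact hM.2 f hf g hg hfg
  · rw [Finset.card_insert_of_notMem hnm]

lemma matching_swap {M : Finset (Finset V)} (hM : IsMatchingF G M) {e : Finset V}
    (he : e ∈ M) {a b : V} (hab : G.Adj a b)
    (ha : a ∈ e ∨ ¬ coveredF M a) (hb : b ∈ e ∨ ¬ coveredF M b) :
    IsMatchingF G (insert {a, b} (M.erase e)) ∧
      (insert {a, b} (M.erase e)).card = M.card := by
  have hnotin : ∀ (z : V), (z ∈ e ∨ ¬ coveredF M z) → ∀ f ∈ M.erase e, z ∉ f := by
    intro z hz f hf hzf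
    have hfM := Finset.mem_of_mem_erase hf
    have hfe := Finset.ne_of_mem_erase hf
    rcases hz with hz | hz
    · exact Finset.disjoint_left.mp (hM.2 f hfM e he hfe) hzf hz
    · exact hz ⟨f, hfM, hzf⟩
  have hd : ∀ g ∈ M.erase e, Disjoint ({a, b} : Finset V) g := by
    intro g hg
    rw [Finset.disjoint_left]
    intro z hz
    rcases Finset.mem_insert.mp hz with rfl | hz
    · exact hnotin z ha g hg
    · rw [Finset.mem_singleton] at hz
      subst hz
      exact hnotin z hb g hg
  have hpairnot : ({a, b} : Finset V) ∉ M.erase e := by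
    intro hmem
    exact hnotin a ha _ hmem (by simp)
  refine ⟨⟨?_, ?_⟩, ?_⟩
  · intro f hf
    rcases Finset.mem_insert.mp hf with rfl | hf
    · exact ⟨a, b, hab, rfl⟩
    · exact hM.1 f (Finset.mem_of_mem_erase hf)
  · intro f hf g hg hfg
    rcases Finset.mem_insert.mp hf with rfl | hf <;>
      rcases Finset.mem_insert.mp hg with rfl | hg
    · exact absurd rfl hfg
    · exact hd g hg
    · exact (hd f hf).symm
    · exact hM.2 f (Finset.mem_of_mem_erase hf) g (Finset.mem_of_mem_erase hg) hfg
  · rw [Finset.card_insert_of_notMem hpairnot, Finset.card_erase_of_mem he]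
    have : 0 < M.card := Finset.card_pos.mpr ⟨e, he⟩
    omega

/-- Any lower bound valid for all terminal positions above `S` bounds the game value. -/
lemma le_gameVal (k : ℕ) : ∀ (n : ℕ) (b : Bool) (S : Finset V), Sᶜ.card ≤ n →
    IsEnclaveless G S →
    (∀ T, S ⊆ T → IsEnclaveless G T → playableSet G T = ∅ → k ≤ T.card) →
    k ≤ gameVal G b S := by
  intro n
  induction n with
  | zero =>
    intro b S hn hS hterm
    rw [gameVal]
    by_cases h : (playableSet G S).Nonempty
    · exfalso
      obtain ⟨v, hv⟩ := h
      simp only [playableSet, Finset.mem_filter] at hv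
      have : v ∈ Sᶜ := Finset.mem_compl.mpr hv.2.1
      have := Finset.card_pos.mpr ⟨v, this⟩
      omega
    · rw [dif_neg h]
      exact hterm S Finset.Subset.rfl hS
        (Finset.not_nonempty_iff_eq_empty.mp h)
  | succ n ih =>
    intro b S hn hS hterm
    rw [gameVal]
    by_cases h : (playableSet G S).Nonempty
    · rw [dif_pos h]
      have key : ∀ v ∈ (playableSet G S).attach, ∀ b' : Bool,
          k ≤ gameVal G b' (insert v.1 S) := by
        intro v _ b'
        have hv := v.2
        simp only [playableSet, Finset.mem_filter] at hv
        have hcard : (insert v.1 S)ᶜ.card ≤ n := by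
          rw [Finset.compl_insert]
          have hlt := Finset.card_erase_lt_of_mem (Finset.mem_compl.mpr hv.2.1)
          omega
        exact ih b' (insert v.1 S) hcard hv.2.2
          (fun T hT => hterm T ((Finset.subset_insert _ _).trans hT))
      cases b with
      | true =>
        simp only [if_true]
        obtain ⟨v, hv⟩ := h
        exact le_trans (key ⟨v, hv⟩ (Finset.mem_attach _ _) false)
          (Finset.le_sup' (fun v => gameVal G false (insert ↑v S))
            (Finset.mem_attach _ ⟨v, hv⟩))
      | false =>
        simp only [Bool.false_eq_true, if_false]
        exact Finset.le_inf' _ _ (fun v hv => key v hv true)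
    · rw [dif_neg h]
      exact hterm S Finset.Subset.rfl hS (Finset.not_nonempty_iff_eq_empty.mp h)

end Aux

/-- Sumner's theorem: a connected claw-free graph of even order has a perfect matching. -/
theorem sumner {α : Type*} [Fintype α] [DecidableEq α] (H : SimpleGraph α)
    [DecidableRel H.Adj] (hconn : H.Connected) (hclaw : ClawFree H)
    (heven : Even (Fintype.card α)) :
    ∃ M : Finset (Finset α), IsMatchingF H M ∧ ∀ v, coveredF M v := by
  classical
  set 𝓜 : Finset (Finset (Finset α)) :=
    Finset.univ.filter (fun M => IsMatchingF H M) with h𝓜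
  have hmem𝓜 : ∀ M : Finset (Finset α), M ∈ 𝓜 ↔ IsMatchingF H M := by
    intro M
    simp [h𝓜]
  have hne𝓜 : 𝓜.Nonempty := ⟨∅, (hmem𝓜 ∅).mpr ⟨by simp, by simp⟩⟩
  set k := 𝓜.sup Finset.card with hk
  have hmaxcard : ∀ M : Finset (Finset α), IsMatchingF H M → M.card ≤ k :=
    fun M hM => Finset.le_sup ((hmem𝓜 M).mpr hM)
  by_contra hno
  push_neg at hno
  -- every maximum matching has two distinct uncovered vertices
  have hQex : ∃ d : ℕ, ∃ M, IsMatchingF H M ∧ M.card = k ∧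
      ∃ u w : α, u ≠ w ∧ ¬ coveredF M u ∧ ¬ coveredF M w ∧ H.dist u w ≤ d := by
    obtain ⟨M, hMmem, hMk⟩ := Finset.exists_mem_eq_sup 𝓜 hne𝓜 Finset.card
    have hMm : IsMatchingF H M := (hmem𝓜 M).mp hMmem
    have huncardeq : (Finset.univ.filter (fun v => ¬ coveredF M v)).card
        = Fintype.card α - 2 * M.card := by
      have h1 : Finset.univ.filter (fun v => ¬ coveredF M v)
          = Finset.univ \ M.biUnion (fun e => e) := by
        ext v
        simp only [Finset.mem_filter, Finset.mem_univ, true_and, Finset.mem_sdiff,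
          Finset.mem_biUnion, coveredF]
        simp
      rw [h1, Finset.card_sdiff_of_subset (Finset.subset_univ _), card_cover H hMm,
        Finset.card_univ]
    obtain ⟨u, hu⟩ := hno M hMm
    have hucard : 2 ≤ (Finset.univ.filter (fun v => ¬ coveredF M v)).card := by
      have h2 : u ∈ Finset.univ.filter (fun v => ¬ coveredF M v) := by
        simp [hu]
      have hpos := Finset.card_pos.mpr ⟨u, h2⟩
      have heven2 : Even ((Finset.univ.filter (fun v => ¬ coveredF M v)).card) := by
        rw [huncardeq]
        obtain ⟨m, hm⟩ := heven
        have h2k : 2 * M.card ≤ Fintype.card α := by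
          rw [← card_cover H hMm, ← Finset.card_univ]
          exact Finset.card_le_card (Finset.subset_univ _)
        refine ⟨m - M.card, ?_⟩
        omega
      rcases heven2 with ⟨m, hm⟩
      omega
    obtain ⟨a, ha, b, hb, hab⟩ := Finset.one_lt_card.mp
      (show 1 < (Finset.univ.filter (fun v => ¬ coveredF M v)).card by omega)
    simp only [Finset.mem_filter, Finset.mem_univ, true_and] at ha hb
    exact ⟨H.dist a b, M, hMm, hMk.symm, a, b, hab, ha, hb, le_rfl⟩
  set d₀ := Nat.find hQex with hd₀
  obtain ⟨M, hMm, hMk, u, w, huw, hcu, hcw, hdist⟩ := Nat.find_spec hQex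
  have hdmin : d₀ ≤ H.dist u w :=
    Nat.find_min' hQex ⟨M, hMm, hMk, u, w, huw, hcu, hcw, le_rfl⟩
  have hdeq : H.dist u w = d₀ := le_antisymm hdist hdmin
  obtain ⟨p, hp, hplen⟩ := (hconn.preconnected u w).exists_path_of_dist
  rw [hdeq] at hplen
  have hnotQ : ∀ m, m < d₀ → ¬ (∃ M, IsMatchingF H M ∧ M.card = k ∧
      ∃ u w : α, u ≠ w ∧ ¬ coveredF M u ∧ ¬ coveredF M w ∧ H.dist u w ≤ m) :=
    fun m hm => Nat.find_min hQex hm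
  cases p with
  | nil => exact huw rfl
  | @cons _ x₁ _ h₁ q =>
    rw [SimpleGraph.Walk.cons_isPath_iff] at hp
    have hux₁ : u ≠ x₁ := h₁.ne
    -- x₁ must be covered
    have hcx₁ : coveredF M x₁ := by
      by_contra hcx
      have hins := matching_insert H hMm h₁ hcu hcx
      have := hmaxcard _ hins.1
      rw [hins.2, hMk] at this
      omega
    obtain ⟨e, he, hx₁e⟩ := hcx₁
    obtain ⟨c, d', hcd, hecd⟩ := hMm.1 e he
    -- the partner y of x₁ in e
    obtain ⟨y, hey, hx₁y⟩ : ∃ y, e = {x₁, y} ∧ H.Adj x₁ y := by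
      rw [hecd] at hx₁e
      rcases Finset.mem_insert.mp hx₁e with rfl | hx
      · exact ⟨d', hecd, hcd⟩
      · rw [Finset.mem_singleton] at hx
        subst hx
        exact ⟨c, by rw [hecd, Finset.pair_comm], hcd.symm⟩
    have hyx₁ : y ≠ x₁ := hx₁y.ne'
    have hyu : y ≠ u := by
      rintro rfl
      exact hcu ⟨e, he, by rw [hey]; simp⟩
    have hyw : y ≠ w := by
      rintro rfl
      exact hcw ⟨e, he, by rw [hey]; simp⟩
    have hx₁inE : x₁ ∈ e := by rw [hey]; simp
    have hyinE : y ∈ e := by rw [hey]; simp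
    cases q with
    | nil =>
      -- dist u w = 1, u w uncovered adjacent: augment
      have hins := matching_insert H hMm h₁ hcu hcw
      have := hmaxcard _ hins.1
      rw [hins.2, hMk] at this
      omega
    | @cons _ x₂ _ h₂ r =>
      rw [SimpleGraph.Walk.cons_isPath_iff] at hp
      have hqsupp := hp.1.2
      have hrIsPath := hp.1.1.1
      have hx₁r : x₁ ∉ r.support := hp.1.2
      have hux₂ : u ≠ x₂ := by
        rintro rfl
        exact hp.2 (by simp [SimpleGraph.Walk.support_cons,
          r.start_mem_support])
      have hx₁x₂ : x₁ ≠ x₂ := h₂.ne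
      have hx₁w : x₁ ≠ w := by
        rintro rfl
        exact hx₁r r.end_mem_support
      have hlen : r.length + 2 = d₀ := by
        simp only [SimpleGraph.Walk.length_cons] at hplen
        omega
      have hdx₂w : H.dist x₂ w ≤ d₀ - 2 := by
        have := SimpleGraph.dist_le r
        omega
      by_cases hyx₂ : y = x₂
      · -- swap {u,x₁} for e; x₂ and w get uncovered, closer
        subst hyx₂
        have hswap := matching_swap H hMm he h₁ (Or.inr hcu) (Or.inl hx₁inE)
        apply hnotQ (d₀ - 1) (by omega)
        refine ⟨_, hswap.1, by rw [hswap.2, hMk], y, w, hyw, ?_, ?_, by omega⟩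
        · rw [coveredF_insert]
          push_neg
          refine ⟨by simp [hux₂.symm, hx₁x₂.symm], ?_⟩
          rw [coveredF_erase H hMm he]
          rintro ⟨-, hnot⟩
          exact hnot hyinE
        · rw [coveredF_insert]
          push_neg
          refine ⟨by simp [huw.symm, hx₁w.symm], ?_⟩
          rw [coveredF_erase H hMm he]
          rintro ⟨hcov, -⟩
          exact hcw hcov
      · -- y ∉ {u, x₁, x₂, w}; claw at x₁
        have hnadj : ¬ H.Adj u x₂ := by
          intro hadj
          have hd1 : H.dist u w ≤ (SimpleGraph.Walk.cons hadj r).length :=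
            SimpleGraph.dist_le _
          rw [hdeq] at hd1
          simp only [SimpleGraph.Walk.length_cons] at hd1
          omega
        have hx₂y : x₂ ≠ y := fun h => hyx₂ h.symm
        set T : Finset α := {u, x₂, y} with hT
        have hcard3 : T.card = 3 := by
          rw [hT]
          rw [Finset.card_insert_of_notMem (by simp [hux₂, Ne.symm hyu]),
            Finset.card_insert_of_notMem (by simp [hx₂y]),
            Finset.card_singleton]
        have hadjall : ∀ z ∈ T, H.Adj x₁ z := by
          intro z hz
          rw [hT] at hz
          rcases Finset.mem_insert.mp hz with rfl | hz
          · exact h₁.symm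
          · rcases Finset.mem_insert.mp hz with rfl | hz
            · exact h₂
            · rw [Finset.mem_singleton] at hz
              subst hz
              exact hx₁y
        have hnp : ¬ (∀ a ∈ T, ∀ b ∈ T, a ≠ b → ¬ H.Adj a b) := by
          intro hpw
          exact hclaw ⟨x₁, T, hcard3, hadjall, hpw⟩
        push_neg at hnp
        obtain ⟨a, haT, b, hbT, hneab, hadjab⟩ := hnp
        -- determine which pair is adjacent
        have hcases : H.Adj y u ∨ H.Adj y x₂ := by
          rw [hT] at haT hbT
          simp only [Finset.mem_insert, Finset.mem_singleton] at haT hbT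
          rcases haT with rfl | rfl | rfl <;> rcases hbT with rfl | rfl | rfl
          · exact absurd rfl hneab
          · exact absurd hadjab hnadj
          · exact Or.inl hadjab.symm
          · exact absurd hadjab.symm hnadj
          · exact absurd rfl hneab
          · exact Or.inr hadjab.symm
          · exact Or.inl hadjab
          · exact Or.inr hadjab
          · exact absurd rfl hneab
        rcases hcases with hyu' | hyx₂'
        · -- replace e by {y,u}: x₁ and w uncovered at distance d₀ - 1
          have hswap := matching_swap H hMm he hyu' (Or.inl hyinE) (Or.inr hcu)
          apply hnotQ (d₀ - 1) (by omega)
          refine ⟨_, hswap.1, by rw [hswap.2, hMk], x₁, w, hx₁w, ?_, ?_, ?_⟩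
          · rw [coveredF_insert]
            push_neg
            refine ⟨by simp [Ne.symm hyx₁, hux₁.symm], ?_⟩
            rw [coveredF_erase H hMm he]
            rintro ⟨-, hnot⟩
            exact hnot hx₁inE
          · rw [coveredF_insert]
            push_neg
            refine ⟨by simp [Ne.symm hyw, huw.symm], ?_⟩
            rw [coveredF_erase H hMm he]
            rintro ⟨hcov, -⟩
            exact hcw hcov
          · have hd1 : H.dist x₁ w ≤ (SimpleGraph.Walk.cons h₂ r).length :=
              SimpleGraph.dist_le _
            simp only [SimpleGraph.Walk.length_cons] at hd1
            omega
        · -- replace e by {u,x₁}: y and w uncovered at distance ≤ d₀ - 1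
          have hswap := matching_swap H hMm he h₁ (Or.inr hcu) (Or.inl hx₁inE)
          apply hnotQ (d₀ - 1) (by omega)
          refine ⟨_, hswap.1, by rw [hswap.2, hMk], y, w, hyw, ?_, ?_, ?_⟩
          · rw [coveredF_insert]
            push_neg
            refine ⟨by simp [hyu, hyx₁], ?_⟩
            rw [coveredF_erase H hMm he]
            rintro ⟨-, hnot⟩
            exact hnot hyinE
          · rw [coveredF_insert]
            push_neg
            refine ⟨by simp [huw.symm, hx₁w.symm], ?_⟩
            rw [coveredF_erase H hMm he]
            rintro ⟨hcov, -⟩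
            exact hcw hcov
          · have hd1 : H.dist y w ≤ (SimpleGraph.Walk.cons hyx₂' r).length :=
              SimpleGraph.dist_le _
            simp only [SimpleGraph.Walk.length_cons] at hd1
            omega

/-- For odd order: there is a vertex `v₀` and a matching covering everything else. -/
lemma sumner_minus_one (G : SimpleGraph V) [DecidableRel G.Adj]
    (hconn : G.Connected) (hclaw : ClawFree G) (hodd : Odd (Fintype.card V)) :
    ∃ (v₀ : V) (M : Finset (Finset V)), IsMatchingF G M ∧
      (∀ v, v ≠ v₀ → coveredF M v) ∧ ¬ coveredF M v₀ := by
  classical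
  have hpos : 0 < Fintype.card V := hodd.pos
  have hnev : Nonempty V := Fintype.card_pos_iff.mp hpos
  obtain ⟨r⟩ := hnev
  by_cases hone : Fintype.card V = 1
  · refine ⟨r, ∅, ⟨by simp, by simp⟩, ?_, ?_⟩
    · intro v hv
      exact absurd (Fintype.card_le_one_iff.mp (by omega) v r) hv
    · rintro ⟨e, he, -⟩
      exact absurd he (Finset.notMem_empty e)
  · have hn2 : 2 ≤ Fintype.card V := by omega
    obtain ⟨v₀, -, hv₀max⟩ := Finset.exists_max_image Finset.univ
      (fun v => G.dist r v) ⟨r, Finset.mem_univ r⟩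
    have hv₀max' : ∀ x, G.dist r x ≤ G.dist r v₀ := fun x => hv₀max x (Finset.mem_univ x)
    have hv₀r : v₀ ≠ r := by
      obtain ⟨x, hx⟩ := Fintype.exists_ne_of_one_lt_card (by omega) r
      have h1 := hconn.pos_dist_of_ne (Ne.symm hx)
      have h2 := hv₀max' x
      intro h
      rw [h] at h2
      simp only [SimpleGraph.dist_self] at h2
      omega
    set s : Set V := {x : V | x ≠ v₀} with hs
    -- walks avoiding v₀
    have havoid : ∀ x : V, x ≠ v₀ → ∃ p : G.Walk r x, ∀ z ∈ p.support, z ≠ v₀ := by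
      intro x hx
      obtain ⟨p, hp, hplen⟩ := (hconn.preconnected r x).exists_path_of_dist
      refine ⟨p, fun z hz => ?_⟩
      rintro rfl
      have h1 := SimpleGraph.Walk.length_takeUntil_le p hz
      have h2 := congrArg SimpleGraph.Walk.length (p.take_spec hz)
      rw [SimpleGraph.Walk.length_append] at h2
      have h3 : 0 < (p.dropUntil z hz).length := by
        rcases Nat.eq_zero_or_pos (p.dropUntil z hz).length with h0 | h0
        · exact absurd (SimpleGraph.Walk.eq_of_length_eq_zero h0) (Ne.symm hx)
        · exact h0
      have h4 : G.dist r z ≤ (p.takeUntil z hz).length :=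
        SimpleGraph.dist_le _
      have h5 := hv₀max' x
      omega
    letI : DecidableRel (G.induce s).Adj := fun a b => by
      simp only [SimpleGraph.comap_adj, Function.Embedding.coe_subtype]
      infer_instance
    have hrs : r ∈ s := Ne.symm hv₀r
    have transfer : ∀ (a b : V) (p : G.Walk a b) (ha : a ∈ s) (hb : b ∈ s),
        (∀ z ∈ p.support, z ≠ v₀) → (G.induce s).Reachable ⟨a, ha⟩ ⟨b, hb⟩ := by
      intro a b p
      induction p with
      | nil =>
        intro ha hb _
        exact SimpleGraph.Reachable.refl _
      | @cons a m b h q ih =>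
        intro ha hb hp
        have hms : m ∈ s := hp m (by simp [SimpleGraph.Walk.support_cons])
        have h1 : (G.induce s).Adj ⟨a, ha⟩ ⟨m, hms⟩ := by
          simp only [SimpleGraph.comap_adj, Function.Embedding.coe_subtype]
          exact h
        exact (h1.reachable).trans
          (ih hms hb (fun z hz => hp z (by simp [SimpleGraph.Walk.support_cons, hz])))
    have hconn' : (G.induce s).Connected := by
      rw [SimpleGraph.connected_iff]
      refine ⟨?_, ⟨⟨r, hrs⟩⟩⟩
      have key : ∀ c : s, (G.induce s).Reachable ⟨r, hrs⟩ c := by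
        rintro ⟨x, hxs⟩
        obtain ⟨p, hp⟩ := havoid x hxs
        exact transfer r x p hrs hxs hp
      intro a b
      exact (key a).symm.trans (key b)
    have hclaw' : ClawFree (G.induce s) := by
      rintro ⟨v, T, hT3, hTadj, hTnon⟩
      refine hclaw ⟨v.1, T.image Subtype.val, ?_, ?_, ?_⟩
      · rw [Finset.card_image_of_injective _ Subtype.val_injective, hT3]
      · intro u hu
        obtain ⟨u', hu', rfl⟩ := Finset.mem_image.mp hu
        have := hTadj u' hu'
        simpa using this
      · intro a ha b hb hab hadj
        obtain ⟨a', ha', rfl⟩ := Finset.mem_image.mp ha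
        obtain ⟨b', hb', rfl⟩ := Finset.mem_image.mp hb
        refine hTnon a' ha' b' hb' (fun h => hab (by rw [h])) ?_
        simp only [SimpleGraph.comap_adj, Function.Embedding.coe_subtype]
        exact hadj
    have hcards : Fintype.card s = Fintype.card V - 1 := by
      have h1 : Fintype.card s = Fintype.card {x : V // ¬ (x = v₀)} := by
        apply Fintype.card_congr
        exact Equiv.refl _
      rw [h1, Fintype.card_subtype_compl, Fintype.card_subtype_eq]
    have heven' : Even (Fintype.card s) := by
      rw [hcards]
      rcases hodd with ⟨m, hm⟩
      exact ⟨m, by omega⟩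
    obtain ⟨M', hM', hcov'⟩ := sumner (G.induce s) hconn' hclaw' heven'
    refine ⟨v₀, M'.image (fun e => e.image Subtype.val), ⟨?_, ?_⟩, ?_, ?_⟩
    · intro e he
      obtain ⟨e', he', rfl⟩ := Finset.mem_image.mp he
      obtain ⟨a, b, hab, rfl⟩ := hM'.1 e' he'
      refine ⟨a.1, b.1, ?_, ?_⟩
      · simpa using hab
      · rw [Finset.image_insert, Finset.image_singleton]
    · intro e he f hf hef
      obtain ⟨e', he', rfl⟩ := Finset.mem_image.mp he
      obtain ⟨f', hf', rfl⟩ := Finset.mem_image.mp hf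
      have hne : e' ≠ f' := fun h => hef (by rw [h])
      rw [Finset.disjoint_left]
      intro x hx hxf
      obtain ⟨x', hx', rfl⟩ := Finset.mem_image.mp hx
      obtain ⟨x'', hx'', hxx⟩ := Finset.mem_image.mp hxf
      have hxeq : x'' = x' := Subtype.val_injective hxx
      subst hxeq
      exact Finset.disjoint_left.mp (hM'.2 e' he' f' hf' hne) hx' hx''
    · intro v hv
      obtain ⟨e', he', hve'⟩ := hcov' ⟨v, hv⟩
      exact ⟨e'.image Subtype.val, Finset.mem_image_of_mem _ he',
        Finset.mem_image_of_mem _ hve'⟩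
    · rintro ⟨e, he, hv₀e⟩
      obtain ⟨e', he', rfl⟩ := Finset.mem_image.mp he
      obtain ⟨x', hx', hxx⟩ := Finset.mem_image.mp hv₀e
      exact x'.2 hxx

/-- If `G` is a connected claw-free finite simple graph of order `n ≥ 2`, then
`Ψ⁺_g(G) ≥ n/2`, i.e. `2·Ψ⁺_g(G) ≥ n`. -/
theorem clawFree_maxStartGameNum_ge {V : Type*} [Fintype V] [DecidableEq V]
    (G : SimpleGraph V) [DecidableRel G.Adj]
    (hconn : G.Connected) (hclaw : ClawFree G) (hn : 2 ≤ Fintype.card V) :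
    Fintype.card V ≤ 2 * maxStartGameNum G := by
  have hmax_of_term : ∀ T : Finset V, playableSet G T = ∅ →
      ∀ v, v ∉ T → ¬ IsEnclaveless G (insert v T) := by
    intro T hT v hv henc
    have : v ∈ playableSet G T := by
      simp only [playableSet, Finset.mem_filter, Finset.mem_univ, true_and]
      exact ⟨hv, henc⟩
    rw [hT] at this
    exact absurd this (Finset.notMem_empty v)
  rcases Nat.even_or_odd (Fintype.card V) with he | ho
  · -- even order
    obtain ⟨M, hM, hcov⟩ := sumner G hconn hclaw he
    have hcover_univ : M.biUnion (fun e => e) = Finset.univ := by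
      apply Finset.eq_univ_of_forall
      intro v
      obtain ⟨e, he, hve⟩ := hcov v
      exact Finset.mem_biUnion.mpr ⟨e, he, hve⟩
    have hcard : Fintype.card V = 2 * M.card := by
      rw [← card_cover G hM, hcover_univ, Finset.card_univ]
    have hk : M.card ≤ gameVal G true ∅ := by
      apply le_gameVal G M.card (∅ᶜ : Finset V).card true ∅ le_rfl
        (isEnclaveless_empty G)
      intro T _ hT hterm
      have := static_bound G T ∅ M hM (fun v _ => hcov v) (by simp)
        (by simp) (Finset.empty_subset T) hT (hmax_of_term T hterm)
      simpa using this
    have : maxStartGameNum G = gameVal G true ∅ := rfl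
    omega
  · -- odd order
    obtain ⟨v₀, M, hM, hcov, huncov⟩ := sumner_minus_one G hconn hclaw ho
    have hcover_erase : M.biUnion (fun e => e) = Finset.univ.erase v₀ := by
      ext v
      simp only [Finset.mem_biUnion, Finset.mem_erase, Finset.mem_univ, and_true]
      constructor
      · rintro ⟨e, he, hve⟩ rfl
        exact huncov ⟨e, he, hve⟩
      · intro hv
        exact hcov v hv
    have hcard : Fintype.card V = 2 * M.card + 1 := by
      have h1 := card_cover G hM
      rw [hcover_erase, Finset.card_erase_of_mem (Finset.mem_univ v₀),
        Finset.card_univ] at h1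
      omega
    -- v₀ has a neighbor
    obtain ⟨u, hu⟩ : ∃ u, G.Adj v₀ u := by
      obtain ⟨w, hw⟩ := Fintype.exists_ne_of_one_lt_card (by omega) v₀
      obtain ⟨p⟩ := hconn.preconnected v₀ w
      cases p with
      | nil => exact absurd rfl hw
      | cons h _ => exact ⟨_, h⟩
    have hv₀encl : IsEnclaveless G {v₀} := by
      intro v hv
      have hv1 : v = v₀ := Finset.mem_singleton.mp hv.1
      subst hv1
      have := hv.2 u hu
      rw [Finset.mem_singleton] at this
      exact G.irrefl (this ▸ hu)
    have hplay : v₀ ∈ playableSet G ∅ := by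
      simp only [playableSet, Finset.mem_filter, Finset.mem_univ, true_and]
      refine ⟨Finset.notMem_empty v₀, ?_⟩
      simpa using hv₀encl
    have h1 : M.card + 1 ≤ gameVal G false {v₀} := by
      apply le_gameVal G (M.card + 1) ({v₀}ᶜ : Finset V).card false {v₀} le_rfl hv₀encl
      intro T hsub hT hterm
      have hv₀T : v₀ ∈ T := hsub (Finset.mem_singleton_self v₀)
      have hstat := static_bound G T {v₀} M hM
        (fun v hv => hcov v (by simpa using hv))
        (by simpa using huncov) (by simp)
        (Finset.singleton_subset_iff.mpr hv₀T) hT (hmax_of_term T hterm)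
      have : (T \ {v₀}).card = T.card - 1 := by
        rw [Finset.card_sdiff_of_subset (Finset.singleton_subset_iff.mpr hv₀T),
          Finset.card_singleton]
      have hTpos : 1 ≤ T.card := Finset.card_pos.mpr ⟨v₀, hv₀T⟩
      omega
    have h2 : gameVal G false {v₀} ≤ gameVal G true ∅ := by
      conv_rhs => rw [gameVal]
      have hne : (playableSet G ∅).Nonempty := ⟨v₀, hplay⟩
      rw [dif_pos hne]
      simp only [if_true]
      have := Finset.le_sup' (fun v : {x // x ∈ playableSet G ∅} =>
        gameVal G false (insert v.1 ∅)) (Finset.mem_attach _ ⟨v₀, hplay⟩)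
      exact this
    have : maxStartGameNum G = gameVal G true ∅ := rfl
    omega

end EnclavelessGame
end
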